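/- arXiv:2005.12079 — 5 statements merged into one kernel-verified Lean document; each statement's English description precedes it below -/
import Mathlib

section
/- For every density matrix ρ on ℂ^{d_A} ⊗ ℂ^{d_B}, every projective measurement Π on Alice's subsystem, every 1 ≤ h ≤ d², and every p ∈ [1,∞), one has M_{h,p}(Π[ρ]) ≤ M_{h,p}(ρ). Consequently the CMN-based discord D^A_{h,p}(ρ) = M_{h,p}(ρ)^p − max_Π M_{h,p}(Π[ρ])^p is nonnegative for every state ρ and all h, p. -/
open Matrix Finset
open scoped Kronecker ComplexOrder

noncomputable section

/-- An orthonormal family of Hermitian matrices with respect to the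
Hilbert–Schmidt inner product `⟨X,Y⟩ = tr (X * Y)`. -/
def IsHSOrthonormal {n m : ℕ} (A : Fin m → Matrix (Fin n) (Fin n) ℂ) : Prop :=
  (∀ i, (A i).IsHermitian) ∧
  ∀ i j, (A i * A j).trace = if i = j then 1 else 0

/-- A density matrix: positive semidefinite with unit trace. -/
def IsDensityMatrix {n : Type*} [Fintype n] [DecidableEq n] (ρ : Matrix n n ℂ) : Prop :=
  ρ.PosSemidef ∧ ρ.trace = 1

/-- The correlation matrix `𝒞_{ij} = tr (ρ (A_i ⊗ B_j))` (a real number since the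
operators involved are Hermitian). -/
def corrMat {dA dB : ℕ} (ρ : Matrix (Fin dA × Fin dB) (Fin dA × Fin dB) ℂ)
    (A : Fin (dA ^ 2) → Matrix (Fin dA) (Fin dA) ℂ)
    (B : Fin (dB ^ 2) → Matrix (Fin dB) (Fin dB) ℂ) :
    Matrix (Fin (dA ^ 2)) (Fin (dB ^ 2)) ℝ :=
  fun i j => (ρ * (A i ⊗ₖ B j)).trace.re

/-- The rectangular "diagonal" matrix with the entries of `σ` on the diagonal. -/
def svdDiag (m n r : ℕ) (σ : Fin r → ℝ) : Matrix (Fin m) (Fin n) ℝ :=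
  fun i j => if h : (i : ℕ) = (j : ℕ) ∧ (i : ℕ) < r then σ ⟨(i : ℕ), h.2⟩ else 0

/-- `σ` is the decreasingly sorted vector of singular values of `C`. -/
def IsSingularValues {m n r : ℕ} (C : Matrix (Fin m) (Fin n) ℝ) (σ : Fin r → ℝ) : Prop :=
  (∀ k, 0 ≤ σ k) ∧ Antitone σ ∧
  ∃ U : Matrix (Fin m) (Fin m) ℝ, ∃ V : Matrix (Fin n) (Fin n) ℝ,
    Uᵀ * U = 1 ∧ Vᵀ * V = 1 ∧ C = U * svdDiag m n r σ * Vᵀ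

/-- A separable bipartite state. -/
def SeparableState {dA dB : ℕ} (ρ : Matrix (Fin dA × Fin dB) (Fin dA × Fin dB) ℂ) : Prop :=
  ∃ (n : ℕ) (w : Fin n → ℝ) (O : Fin n → Matrix (Fin dA) (Fin dA) ℂ)
    (Q : Fin n → Matrix (Fin dB) (Fin dB) ℂ),
    (∀ k, 0 ≤ w k) ∧ (∑ k, w k = 1) ∧
    (∀ k, IsDensityMatrix (O k)) ∧ (∀ k, IsDensityMatrix (Q k)) ∧
    ρ = ∑ k, (w k : ℂ) • (O k ⊗ₖ Q k)

/-- Filter Normal Form: all traceless local observables have vanishing expectation. -/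
def IsFNF {dA dB : ℕ} (ρ : Matrix (Fin dA × Fin dB) (Fin dA × Fin dB) ℂ) : Prop :=
  (∀ A : Matrix (Fin dA) (Fin dA) ℂ, A.IsHermitian → A.trace = 0 →
    (ρ * (A ⊗ₖ (1 : Matrix (Fin dB) (Fin dB) ℂ))).trace = 0) ∧
  (∀ B : Matrix (Fin dB) (Fin dB) ℂ, B.IsHermitian → B.trace = 0 →
    (ρ * ((1 : Matrix (Fin dA) (Fin dA) ℂ) ⊗ₖ B)).trace = 0)

/-- The Correlation Minor Norm with parameters `h`, `p`, expressed in terms of the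
singular values `σ`. -/
def CMN {r : ℕ} (σ : Fin r → ℝ) (h : ℕ) (p : ℝ) : ℝ :=
  (∑ R ∈ Finset.univ.powersetCard h, ∏ k ∈ R, σ k ^ p) ^ (1 / p)

/-- The Correlation Minor Norm with `p = ∞`: the product of the `h` largest singular
values (the singular values being sorted decreasingly). -/
def CMNinf {r : ℕ} (σ : Fin r → ℝ) (h : ℕ) : ℝ :=
  ∏ k ∈ Finset.univ.filter (fun k : Fin r => (k : ℕ) < h), σ k

/-- The `h`-th elementary symmetric polynomial evaluated at `x`. -/
def esym {n : ℕ} (h : ℕ) (x : Fin n → ℝ) : ℝ :=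
  ∑ R ∈ Finset.univ.powersetCard h, ∏ k ∈ R, x k

/-- An orthonormal family of vectors in `ℂ^n`. -/
def IsONFamily {n r : ℕ} (v : Fin r → (Fin n → ℂ)) : Prop :=
  ∀ k l, star (v k) ⬝ᵥ v l = if k = l then 1 else 0

/-- The rank-one projection `|v⟩⟨v|`. -/
def projOf {n : ℕ} (v : Fin n → ℂ) : Matrix (Fin n) (Fin n) ℂ :=
  Matrix.vecMulVec v (star v)

/-- The post-measurement state `Π[ρ] = Σ_l (|l⟩⟨l| ⊗ 𝟙) ρ (|l⟩⟨l| ⊗ 𝟙)` for the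
projective measurement on Alice's side given by the orthonormal basis `e`. -/
def measured {dA dB : ℕ} (ρ : Matrix (Fin dA × Fin dB) (Fin dA × Fin dB) ℂ)
    (e : Fin dA → (Fin dA → ℂ)) : Matrix (Fin dA × Fin dB) (Fin dA × Fin dB) ℂ :=
  ∑ l, (projOf (e l) ⊗ₖ (1 : Matrix (Fin dB) (Fin dB) ℂ)) * ρ *
       (projOf (e l) ⊗ₖ (1 : Matrix (Fin dB) (Fin dB) ℂ))

/-- A regular, coherent, degree-1 quantum design with `r = 1`: a family of rank-one
orthogonal projections summing to `(v/b)·𝟙` whose pairwise overlaps are constant. -/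
def IsQDesign {b v : ℕ} (P : Fin v → Matrix (Fin b) (Fin b) ℂ) : Prop :=
  (∀ k, (P k).IsHermitian) ∧ (∀ k, P k * P k = P k) ∧ (∀ k, (P k).trace = 1) ∧
  (∑ k, P k) = ((v : ℂ) / (b : ℂ)) • 1 ∧
  ∃ μ : ℝ, ∀ k l, k ≠ l → (P k * P l).trace = (μ : ℂ)

/-- A classical-quantum state `χ = Σ_l q_l |l⟩⟨l| ⊗ ρ_l`. -/
def IsCQState {dA dB : ℕ} (χ : Matrix (Fin dA × Fin dB) (Fin dA × Fin dB) ℂ) : Prop :=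
  ∃ e : Fin dA → (Fin dA → ℂ), IsONFamily e ∧
  ∃ (q : Fin dA → ℝ) (τ : Fin dA → Matrix (Fin dB) (Fin dB) ℂ),
    (∀ l, 0 ≤ q l) ∧ (∑ l, q l = 1) ∧ (∀ l, IsDensityMatrix (τ l)) ∧
    χ = ∑ l, (q l : ℂ) • (projOf (e l) ⊗ₖ τ l)

/-- Squared Frobenius norm. -/
def frobSq {n : Type*} [Fintype n] (M : Matrix n n ℂ) : ℝ :=
  ∑ i, ∑ j, Complex.normSq (M i j)

/-- Geometric quantum discord with respect to Alice's subsystem. -/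
def geoDiscord {dA dB : ℕ} (ρ : Matrix (Fin dA × Fin dB) (Fin dA × Fin dB) ℂ) : ℝ :=
  sInf {x : ℝ | ∃ χ, IsCQState χ ∧ x = frobSq (ρ - χ)}

/-- The set of values `M_{h,p}(Π[ρ])^p` over all projective measurements `Π` on
Alice's subsystem. -/
def measuredCMNSet {dA dB : ℕ} (ρ : Matrix (Fin dA × Fin dB) (Fin dA × Fin dB) ℂ)
    (A : Fin (dA ^ 2) → Matrix (Fin dA) (Fin dA) ℂ)
    (B : Fin (dB ^ 2) → Matrix (Fin dB) (Fin dB) ℂ) (h : ℕ) (p : ℝ) : Set ℝ :=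
  {x | ∃ e : Fin dA → (Fin dA → ℂ), IsONFamily e ∧
    ∃ σ' : Fin (min dA dB ^ 2) → ℝ,
      IsSingularValues (corrMat (measured ρ e) A B) σ' ∧ x = CMN σ' h p ^ p}

/-- The vector `Σ_k s_k |φ_k⟩⊗|ξ_k⟩` of a Schmidt decomposition. -/
def pureVec {dA dB r : ℕ} (s : Fin r → ℝ) (φ : Fin r → (Fin dA → ℂ))
    (ξ : Fin r → (Fin dB → ℂ)) : Fin dA × Fin dB → ℂ :=
  fun i => ∑ k, (s k : ℂ) * φ k i.1 * ξ k i.2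


/-! ### Auxiliary lemmas -/

section AuxReal

open Matrix

lemma dot_self_nonneg' {m : ℕ} (x : Fin m → ℝ) : 0 ≤ x ⬝ᵥ x :=
  Finset.sum_nonneg fun i _ => mul_self_nonneg _

lemma vecMul_eq' {a b : ℕ} (V : Matrix (Fin a) (Fin b) ℝ) (x : Fin a → ℝ) :
    x ᵥ* V = Vᵀ *ᵥ x :=
  (Matrix.mulVec_transpose V x).symm

lemma quad_mul' {m n : ℕ} (C : Matrix (Fin m) (Fin n) ℝ) (x : Fin n → ℝ) :
    x ⬝ᵥ ((Cᵀ * C) *ᵥ x) = (C *ᵥ x) ⬝ᵥ (C *ᵥ x) := by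
  rw [← Matrix.mulVec_mulVec, Matrix.dotProduct_mulVec, vecMul_eq', Matrix.transpose_transpose]

lemma proj_qf {m : ℕ} (S : Matrix (Fin m) (Fin m) ℝ) (hs : Sᵀ = S) (hi : S * S = S)
    (x : Fin m → ℝ) : x ⬝ᵥ (S *ᵥ x) = (S *ᵥ x) ⬝ᵥ (S *ᵥ x) := by
  have h : Sᵀ * S = S := by rw [hs, hi]
  conv_lhs => rw [← h]
  exact quad_mul' S x

lemma contraction_of_proj {m : ℕ} (T : Matrix (Fin m) (Fin m) ℝ) (hsym : Tᵀ = T)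
    (hidem : T * T = T) (x : Fin m → ℝ) :
    (T *ᵥ x) ⬝ᵥ (T *ᵥ x) ≤ x ⬝ᵥ x := by
  have h1 : x ⬝ᵥ (T *ᵥ x) = (T *ᵥ x) ⬝ᵥ (T *ᵥ x) := proj_qf T hsym hidem x
  have hs2 : (1 - T)ᵀ = 1 - T := by rw [Matrix.transpose_sub, Matrix.transpose_one, hsym]
  have hi2 : (1 - T) * (1 - T) = 1 - T := by
    simp only [Matrix.sub_mul, Matrix.mul_sub, Matrix.one_mul, Matrix.mul_one, hidem]
    abel
  have h2 := proj_qf (1 - T) hs2 hi2 x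
  have h3 : 0 ≤ ((1 - T) *ᵥ x) ⬝ᵥ ((1 - T) *ᵥ x) := dot_self_nonneg' _
  have h4 : x ⬝ᵥ ((1 - T) *ᵥ x) = x ⬝ᵥ x - x ⬝ᵥ (T *ᵥ x) := by
    rw [Matrix.sub_mulVec, dotProduct_sub, Matrix.one_mulVec]
  linarith

lemma weyl_mono {n : ℕ} (lam lam' : Fin n → ℝ)
    (hlam : Antitone lam) (hlam' : Antitone lam')
    (V V' : Matrix (Fin n) (Fin n) ℝ)
    (hV : Vᵀ * V = 1) (hV' : V'ᵀ * V' = 1)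
    (hle : ∀ x : Fin n → ℝ,
      x ⬝ᵥ ((V' * diagonal lam' * V'ᵀ) *ᵥ x) ≤ x ⬝ᵥ ((V * diagonal lam * Vᵀ) *ᵥ x))
    (k : Fin n) : lam' k ≤ lam k := by
  classical
  let f : (Fin n → ℝ) →ₗ[ℝ] (Fin (k : ℕ) → ℝ) :=
    (LinearMap.funLeft ℝ ℝ (fun i : Fin (k : ℕ) => (⟨i.1, i.2.trans k.2⟩ : Fin n))).comp
      (Matrix.mulVecLin Vᵀ)
  let g : (Fin n → ℝ) →ₗ[ℝ] (Fin (n - 1 - (k : ℕ)) → ℝ) :=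
    (LinearMap.funLeft ℝ ℝ (fun i : Fin (n - 1 - (k : ℕ)) =>
      (⟨(k : ℕ) + 1 + i.1, by have := i.2; have := k.2; omega⟩ : Fin n))).comp
      (Matrix.mulVecLin V'ᵀ)
  have hfin : Module.finrank ℝ (Fin n → ℝ) = n := Module.finrank_fin_fun ℝ
  have hker1 : n - (k : ℕ) ≤ Module.finrank ℝ (LinearMap.ker f) := by
    have h1 := LinearMap.finrank_range_add_finrank_ker f
    have h2 : Module.finrank ℝ (LinearMap.range f) ≤ (k : ℕ) := by
      simpa using Submodule.finrank_le (LinearMap.range f)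
    rw [hfin] at h1
    omega
  have hker2 : (k : ℕ) + 1 ≤ Module.finrank ℝ (LinearMap.ker g) := by
    have h1 := LinearMap.finrank_range_add_finrank_ker g
    have h2 : Module.finrank ℝ (LinearMap.range g) ≤ n - 1 - (k : ℕ) := by
      simpa using Submodule.finrank_le (LinearMap.range g)
    rw [hfin] at h1
    have := k.2
    omega
  have hsup : Module.finrank ℝ ↥(LinearMap.ker f ⊔ LinearMap.ker g) ≤ n := by
    have := Submodule.finrank_le (LinearMap.ker f ⊔ LinearMap.ker g)
    rwa [hfin] at this
  have hinf := Submodule.finrank_sup_add_finrank_inf_eq (LinearMap.ker f) (LinearMap.ker g)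
  have hpos : 0 < Module.finrank ℝ ↥(LinearMap.ker f ⊓ LinearMap.ker g) := by omega
  obtain ⟨x, hxmem, hx0⟩ : ∃ x, x ∈ LinearMap.ker f ⊓ LinearMap.ker g ∧ x ≠ 0 := by
    haveI := Module.finrank_pos_iff.mp hpos
    obtain ⟨z, hz⟩ := exists_ne (0 : ↥(LinearMap.ker f ⊓ LinearMap.ker g))
    exact ⟨z.1, z.2, fun h => hz (Subtype.ext h)⟩
  have hxf : f x = 0 := (Submodule.mem_inf.mp hxmem).1
  have hxg : g x = 0 := (Submodule.mem_inf.mp hxmem).2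
  have hy0 : ∀ j : Fin n, (j : ℕ) < (k : ℕ) → (Vᵀ *ᵥ x) j = 0 := by
    intro j hj
    have := congrFun hxf ⟨(j : ℕ), hj⟩
    simp only [f, LinearMap.comp_apply, LinearMap.funLeft_apply, Matrix.mulVecLin_apply,
      Pi.zero_apply] at this
    convert this using 2
  have hy'0 : ∀ j : Fin n, (k : ℕ) < (j : ℕ) → (V'ᵀ *ᵥ x) j = 0 := by
    intro j hj
    have hj2 : (j : ℕ) - (k : ℕ) - 1 < n - 1 - (k : ℕ) := by have := j.2; omega
    have hc := congrFun hxg ⟨(j : ℕ) - (k : ℕ) - 1, hj2⟩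
    simp only [g, LinearMap.comp_apply, LinearMap.funLeft_apply, Matrix.mulVecLin_apply,
      Pi.zero_apply] at hc
    have hidx : (⟨(k : ℕ) + 1 + ((j : ℕ) - (k : ℕ) - 1),
        by have := j.2; omega⟩ : Fin n) = j := by
      apply Fin.ext
      show (k : ℕ) + 1 + ((j : ℕ) - (k : ℕ) - 1) = (j : ℕ)
      omega
    rwa [hidx] at hc
  have hquad : ∀ (W : Matrix (Fin n) (Fin n) ℝ) (mu : Fin n → ℝ) (v : Fin n → ℝ),
      v ⬝ᵥ ((W * diagonal mu * Wᵀ) *ᵥ v)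
        = ∑ j, mu j * ((Wᵀ *ᵥ v) j * (Wᵀ *ᵥ v) j) := by
    intro W mu v
    rw [← Matrix.mulVec_mulVec, ← Matrix.mulVec_mulVec, Matrix.dotProduct_mulVec, vecMul_eq']
    simp only [dotProduct, Matrix.mulVec_diagonal]
    exact Finset.sum_congr rfl fun j _ => by ring
  have hNy : (Vᵀ *ᵥ x) ⬝ᵥ (Vᵀ *ᵥ x) = x ⬝ᵥ x := by
    have h := (quad_mul' Vᵀ x).symm
    rw [Matrix.transpose_transpose, mul_eq_one_comm.mp hV, Matrix.one_mulVec] at h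
    exact h
  have hNy' : (V'ᵀ *ᵥ x) ⬝ᵥ (V'ᵀ *ᵥ x) = x ⬝ᵥ x := by
    have h := (quad_mul' V'ᵀ x).symm
    rw [Matrix.transpose_transpose, mul_eq_one_comm.mp hV', Matrix.one_mulVec] at h
    exact h
  have hxx : 0 < x ⬝ᵥ x := by
    obtain ⟨i, hi⟩ : ∃ i, x i ≠ 0 := by
      by_contra hcon
      push_neg at hcon
      exact hx0 (funext hcon)
    exact Finset.sum_pos' (fun i _ => mul_self_nonneg _)
      ⟨i, Finset.mem_univ i, mul_self_pos.mpr hi⟩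
  have c1 : lam' k * (x ⬝ᵥ x) ≤ ∑ j, lam' j * ((V'ᵀ *ᵥ x) j * (V'ᵀ *ᵥ x) j) := by
    rw [← hNy']
    simp only [dotProduct]
    rw [Finset.mul_sum]
    apply Finset.sum_le_sum
    intro j _
    rcases le_or_gt j k with hjk | hkj
    · exact mul_le_mul_of_nonneg_right (hlam' hjk) (mul_self_nonneg _)
    · rw [hy'0 j hkj]
      simp
  have c2 : ∑ j, lam j * ((Vᵀ *ᵥ x) j * (Vᵀ *ᵥ x) j) ≤ lam k * (x ⬝ᵥ x) := by
    rw [← hNy]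
    simp only [dotProduct]
    rw [Finset.mul_sum]
    apply Finset.sum_le_sum
    intro j _
    rcases le_or_gt k j with hkj | hjk
    · exact mul_le_mul_of_nonneg_right (hlam hkj) (mul_self_nonneg _)
    · rw [hy0 j hjk]
      simp
  have c3 := hle x
  rw [hquad V' lam' x, hquad V lam x] at c3
  exact le_of_mul_le_mul_right (le_trans c1 (le_trans c3 c2)) hxx

lemma svdDiag_gram {m n r : ℕ} (hrm : r ≤ m) (σ : Fin r → ℝ) :
    (svdDiag m n r σ)ᵀ * svdDiag m n r σ =
      diagonal (fun j : Fin n => if h : (j : ℕ) < r then σ ⟨j, h⟩ * σ ⟨j, h⟩ else 0) := by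
  ext j j'
  simp only [Matrix.mul_apply, Matrix.transpose_apply, svdDiag, Matrix.diagonal_apply]
  by_cases hjj : j = j'
  · subst hjj
    rw [if_pos rfl]
    by_cases hjr : (j : ℕ) < r
    · rw [dif_pos hjr, Finset.sum_eq_single (⟨(j : ℕ), lt_of_lt_of_le hjr hrm⟩ : Fin m)]
      · rw [dif_pos ⟨rfl, hjr⟩]
      · intro i _ hne
        rw [dif_neg, zero_mul]
        rintro ⟨h1, -⟩
        exact hne (Fin.ext h1)
      · intro hmem
        exact absurd (Finset.mem_univ _) hmem
    · rw [dif_neg hjr]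
      apply Finset.sum_eq_zero
      intro i _
      rw [dif_neg, zero_mul]
      rintro ⟨h1, h2⟩
      exact hjr (h1 ▸ h2)
  · rw [if_neg hjj]
    apply Finset.sum_eq_zero
    intro i _
    by_cases h1 : ((i : ℕ) = (j : ℕ) ∧ (i : ℕ) < r)
    · have h2 : ¬((i : ℕ) = (j' : ℕ) ∧ (i : ℕ) < r) := by
        rintro ⟨h2, -⟩
        exact hjj (Fin.ext (h1.1.symm.trans h2))
      rw [dif_neg h2, mul_zero]
    · rw [dif_neg h1, zero_mul]

lemma gram_eq {m n r : ℕ} (hrm : r ≤ m) (C : Matrix (Fin m) (Fin n) ℝ)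
    (σ : Fin r → ℝ) (U : Matrix (Fin m) (Fin m) ℝ) (V : Matrix (Fin n) (Fin n) ℝ)
    (hU : Uᵀ * U = 1) (hC : C = U * svdDiag m n r σ * Vᵀ) :
    Cᵀ * C = V * diagonal
      (fun j : Fin n => if h : (j : ℕ) < r then σ ⟨j, h⟩ * σ ⟨j, h⟩ else 0) * Vᵀ := by
  rw [hC]
  simp only [Matrix.transpose_mul, Matrix.transpose_transpose, Matrix.mul_assoc]
  rw [← Matrix.mul_assoc Uᵀ U, hU, Matrix.one_mul,
    ← Matrix.mul_assoc (svdDiag m n r σ)ᵀ (svdDiag m n r σ) Vᵀ, svdDiag_gram hrm σ]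

lemma lam_antitone {n r : ℕ} {τ : Fin r → ℝ} (h0 : ∀ k, 0 ≤ τ k) (ha : Antitone τ) :
    Antitone (fun j : Fin n => if h : (j : ℕ) < r then τ ⟨j, h⟩ * τ ⟨j, h⟩ else 0) := by
  intro j j' hjj
  by_cases h2 : (j' : ℕ) < r
  · have h1 : (j : ℕ) < r := lt_of_le_of_lt hjj h2
    simp only [dif_pos h1, dif_pos h2]
    have hle : τ ⟨(j' : ℕ), h2⟩ ≤ τ ⟨(j : ℕ), h1⟩ := ha hjj
    exact mul_le_mul hle hle (h0 _) ((h0 _).trans hle)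
  · simp only [dif_neg h2]
    by_cases h1 : (j : ℕ) < r
    · simp only [dif_pos h1]
      exact mul_nonneg (h0 _) (h0 _)
    · simp only [dif_neg h1]
      exact le_refl 0

lemma sv_le {m n r : ℕ} (hrm : r ≤ m) (hrn : r ≤ n)
    (C : Matrix (Fin m) (Fin n) ℝ) (T : Matrix (Fin m) (Fin m) ℝ)
    (hT : ∀ x : Fin m → ℝ, (T *ᵥ x) ⬝ᵥ (T *ᵥ x) ≤ x ⬝ᵥ x)
    {σ σ' : Fin r → ℝ}
    (hσ : IsSingularValues C σ) (hσ' : IsSingularValues (T * C) σ') :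
    ∀ k, σ' k ≤ σ k := by
  obtain ⟨hσ0, hσa, U, V, hU, hV, hC⟩ := hσ
  obtain ⟨hσ0', hσa', U', V', hU', hV', hC'⟩ := hσ'
  have hG := gram_eq hrm C σ U V hU hC
  have hG' := gram_eq hrm (T * C) σ' U' V' hU' hC'
  have key : ∀ x : Fin n → ℝ,
      x ⬝ᵥ ((V' * diagonal
        (fun j : Fin n => if h : (j : ℕ) < r then σ' ⟨j, h⟩ * σ' ⟨j, h⟩ else 0) * V'ᵀ) *ᵥ x)
      ≤ x ⬝ᵥ ((V * diagonal
        (fun j : Fin n => if h : (j : ℕ) < r then σ ⟨j, h⟩ * σ ⟨j, h⟩ else 0) * Vᵀ) *ᵥ x) := by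
    intro x
    rw [← hG, ← hG', quad_mul', quad_mul']
    have hTC : (T * C) *ᵥ x = T *ᵥ (C *ᵥ x) := (Matrix.mulVec_mulVec x T C).symm
    rw [hTC]
    exact hT (C *ᵥ x)
  have hw := weyl_mono _ _ (lam_antitone hσ0 hσa) (lam_antitone hσ0' hσa') V V' hV hV' key
  intro k
  have hkn : (k : ℕ) < n := lt_of_lt_of_le k.2 hrn
  have := hw ⟨(k : ℕ), hkn⟩
  simp only [dif_pos k.2, Fin.eta] at this
  nlinarith [hσ0 k, hσ0' k]

end AuxReal

section AuxComplex

open Matrix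

lemma projOf_isHermitian {d : ℕ} (v : Fin d → ℂ) : (projOf v).IsHermitian := by
  ext i j
  simp only [projOf, Matrix.conjTranspose_apply, Matrix.vecMulVec_apply, Pi.star_apply,
    star_mul', star_star]
  ring

lemma projOf_mul_projOf {d : ℕ} {e : Fin d → Fin d → ℂ} (he : IsONFamily e) (l k : Fin d) :
    projOf (e l) * projOf (e k) = if l = k then projOf (e l) else 0 := by
  have hdot := he l k
  have hmain : ∀ i j, (projOf (e l) * projOf (e k)) i j
      = (star (e l) ⬝ᵥ e k) * (e l i * star (e k j)) := by
    intro i j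
    simp only [Matrix.mul_apply, projOf, Matrix.vecMulVec_apply, Pi.star_apply, dotProduct]
    rw [Finset.sum_mul]
    exact Finset.sum_congr rfl fun s _ => by ring
  by_cases hlk : l = k
  · subst hlk
    rw [if_pos rfl]
    ext i j
    rw [hmain, hdot, if_pos rfl, one_mul]
    simp [projOf, Matrix.vecMulVec_apply]
  · rw [if_neg hlk]
    ext i j
    rw [hmain, hdot, if_neg hlk, zero_mul]
    simp

/-- The pinching map `X ↦ Σ_l |e_l⟩⟨e_l| X |e_l⟩⟨e_l|`. -/
def pinch {d : ℕ} (e : Fin d → Fin d → ℂ) (X : Matrix (Fin d) (Fin d) ℂ) :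
    Matrix (Fin d) (Fin d) ℂ :=
  ∑ l, projOf (e l) * X * projOf (e l)

lemma pinch_isHermitian {d : ℕ} (e : Fin d → Fin d → ℂ) {X : Matrix (Fin d) (Fin d) ℂ}
    (hX : X.IsHermitian) : (pinch e X).IsHermitian := by
  show (pinch e X)ᴴ = pinch e X
  unfold pinch
  rw [Matrix.conjTranspose_sum]
  refine Finset.sum_congr rfl fun l _ => ?_
  rw [Matrix.conjTranspose_mul, Matrix.conjTranspose_mul, (projOf_isHermitian _).eq, hX.eq,
    ← Matrix.mul_assoc]

lemma pinch_adjoint {d : ℕ} (e : Fin d → Fin d → ℂ) (X Y : Matrix (Fin d) (Fin d) ℂ) :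
    (X * pinch e Y).trace = (pinch e X * Y).trace := by
  unfold pinch
  rw [Finset.mul_sum, Finset.sum_mul, Matrix.trace_sum, Matrix.trace_sum]
  refine Finset.sum_congr rfl fun l _ => ?_
  rw [Matrix.trace_mul_comm X (projOf (e l) * Y * projOf (e l)),
    Matrix.mul_assoc (projOf (e l) * Y) (projOf (e l)) X,
    Matrix.trace_mul_comm (projOf (e l) * Y) (projOf (e l) * X),
    ← Matrix.mul_assoc (projOf (e l) * X) (projOf (e l)) Y]

lemma pinch_pinch {d : ℕ} {e : Fin d → Fin d → ℂ} (he : IsONFamily e)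
    (X : Matrix (Fin d) (Fin d) ℂ) : pinch e (pinch e X) = pinch e X := by
  have step1 : ∀ k, projOf (e k) * pinch e X * projOf (e k)
      = ∑ l, (projOf (e k) * projOf (e l)) * X * (projOf (e l) * projOf (e k)) := by
    intro k
    unfold pinch
    rw [Finset.mul_sum, Finset.sum_mul]
    exact Finset.sum_congr rfl fun l _ => by simp only [Matrix.mul_assoc]
  have step2 : ∀ k, (∑ l, (projOf (e k) * projOf (e l)) * X * (projOf (e l) * projOf (e k)))
      = projOf (e k) * X * projOf (e k) := by
    intro k
    rw [Finset.sum_eq_single k]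
    · rw [projOf_mul_projOf he k k, if_pos rfl]
    · intro l _ hlk
      rw [projOf_mul_projOf he k l, if_neg (fun h => hlk h.symm)]
      simp
    · intro hmem
      exact absurd (Finset.mem_univ _) hmem
  calc pinch e (pinch e X)
      = ∑ k, ∑ l, (projOf (e k) * projOf (e l)) * X * (projOf (e l) * projOf (e k)) :=
        Finset.sum_congr rfl fun k _ => step1 k
    _ = ∑ k, projOf (e k) * X * projOf (e k) := Finset.sum_congr rfl fun k _ => step2 k
    _ = pinch e X := rfl

lemma pinch_smul_sum {d : ℕ} (e : Fin d → Fin d → ℂ) {ι : Type*} [Fintype ι]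
    (c : ι → ℂ) (M : ι → Matrix (Fin d) (Fin d) ℂ) :
    pinch e (∑ t, c t • M t) = ∑ t, c t • pinch e (M t) := by
  unfold pinch
  simp only [Finset.mul_sum, Finset.sum_mul, Matrix.mul_smul, Matrix.smul_mul, Finset.smul_sum]
  exact Finset.sum_comm

lemma trace_mul_re_eq {d : ℕ} {X Y : Matrix (Fin d) (Fin d) ℂ}
    (hX : X.IsHermitian) (hY : Y.IsHermitian) :
    (X * Y).trace = (((X * Y).trace.re : ℝ) : ℂ) := by
  have hst : (starRingEnd ℂ) ((X * Y).trace) = (X * Y).trace := by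
    have h1 : ((X * Y)ᴴ).trace = star ((X * Y).trace) := Matrix.trace_conjTranspose _
    rw [Matrix.conjTranspose_mul, hX.eq, hY.eq, Matrix.trace_mul_comm] at h1
    rw [← Complex.star_def]
    exact h1.symm
  exact (Complex.conj_eq_iff_re.mp hst).symm

lemma sum_kron {ι : Type*} [Fintype ι] {a b : ℕ} (f : ι → Matrix (Fin a) (Fin a) ℂ)
    (B : Matrix (Fin b) (Fin b) ℂ) :
    (∑ x, f x) ⊗ₖ B = ∑ x, f x ⊗ₖ B := by
  ext ⟨i1, i2⟩ ⟨j1, j2⟩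
  simp [Matrix.kroneckerMap_apply, Matrix.sum_apply, Finset.sum_mul]

lemma trace_basis_sum {d : ℕ} {A : Fin (d ^ 2) → Matrix (Fin d) (Fin d) ℂ}
    (hA : IsHSOrthonormal A) (c : Fin (d ^ 2) → ℂ) (k : Fin (d ^ 2)) :
    (A k * ∑ m, c m • A m).trace = c k := by
  rw [Finset.mul_sum, Matrix.trace_sum]
  have h1 : ∀ m, (A k * (c m • A m)).trace = c m * if k = m then 1 else 0 := by
    intro m
    rw [Matrix.mul_smul, Matrix.trace_smul, hA.2 k m, smul_eq_mul]
  rw [Finset.sum_congr rfl fun m _ => h1 m]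
  simp

lemma expand_basis {d : ℕ} (hd : 0 < d) {A : Fin (d ^ 2) → Matrix (Fin d) (Fin d) ℂ}
    (hA : IsHSOrthonormal A) (M : Matrix (Fin d) (Fin d) ℂ) :
    M = ∑ m, (A m * M).trace • A m := by
  haveI : Nonempty (Fin (d ^ 2)) := ⟨⟨0, by positivity⟩⟩
  have hli : LinearIndependent ℂ A := by
    rw [Fintype.linearIndependent_iff]
    intro g hg i
    have h1 := trace_basis_sum hA g i
    rw [hg] at h1
    simpa using h1.symm
  have hcard : Fintype.card (Fin (d ^ 2))
      = Module.finrank ℂ (Matrix (Fin d) (Fin d) ℂ) := by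
    rw [Module.finrank_matrix]
    simp [pow_two]
  have hsp := hli.span_eq_top_of_card_eq_finrank hcard
  have hmem : M ∈ Submodule.span ℂ (Set.range A) := by
    rw [hsp]
    trivial
  rw [Submodule.mem_span_range_iff_exists_fun] at hmem
  obtain ⟨c, hc⟩ := hmem
  have hck : ∀ k, (A k * M).trace = c k := fun k => by
    rw [← hc]
    exact trace_basis_sum hA c k
  calc M = ∑ m, c m • A m := hc.symm
    _ = ∑ m, (A m * M).trace • A m :=
        Finset.sum_congr rfl fun m _ => by rw [hck m]

lemma pinch_expand {d : ℕ} (hd : 0 < d) {A : Fin (d ^ 2) → Matrix (Fin d) (Fin d) ℂ}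
    (hA : IsHSOrthonormal A) (e : Fin d → Fin d → ℂ) (i : Fin (d ^ 2)) :
    pinch e (A i) = ∑ s, ((((A s * pinch e (A i)).trace.re : ℝ)) : ℂ) • A s := by
  nth_rewrite 1 [expand_basis hd hA (pinch e (A i))]
  exact Finset.sum_congr rfl fun s _ => by
    rw [← trace_mul_re_eq (hA.1 s) (pinch_isHermitian e (hA.1 i))]

end AuxComplex

section AuxGlue

open Matrix

/-- The matrix of the pinching map in the Hermitian basis `A`. -/
def Tmat {dA : ℕ} (A : Fin (dA ^ 2) → Matrix (Fin dA) (Fin dA) ℂ)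
    (e : Fin dA → Fin dA → ℂ) : Matrix (Fin (dA ^ 2)) (Fin (dA ^ 2)) ℝ :=
  Matrix.of fun i s => ((A s * pinch e (A i)).trace).re

lemma Tmat_apply {dA : ℕ} (A : Fin (dA ^ 2) → Matrix (Fin dA) (Fin dA) ℂ)
    (e : Fin dA → Fin dA → ℂ) (i s : Fin (dA ^ 2)) :
    Tmat A e i s = ((A s * pinch e (A i)).trace).re := rfl

lemma corr_measured {dA dB : ℕ} (hdA : 0 < dA)
    (A : Fin (dA ^ 2) → Matrix (Fin dA) (Fin dA) ℂ)
    (B : Fin (dB ^ 2) → Matrix (Fin dB) (Fin dB) ℂ)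
    (hA : IsHSOrthonormal A)
    (ρ : Matrix (Fin dA × Fin dB) (Fin dA × Fin dB) ℂ)
    (e : Fin dA → Fin dA → ℂ) :
    corrMat (measured ρ e) A B = Tmat A e * corrMat ρ A B := by
  ext i j
  have ha : (measured ρ e * (A i ⊗ₖ B j)).trace = (ρ * (pinch e (A i) ⊗ₖ B j)).trace := by
    rw [measured, Finset.sum_mul, Matrix.trace_sum]
    have hterm : ∀ l,
        ((projOf (e l) ⊗ₖ (1 : Matrix (Fin dB) (Fin dB) ℂ)) * ρ
          * (projOf (e l) ⊗ₖ (1 : Matrix (Fin dB) (Fin dB) ℂ)) * (A i ⊗ₖ B j)).trace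
        = (ρ * ((projOf (e l) * A i * projOf (e l)) ⊗ₖ B j)).trace := by
      intro l
      set Q := projOf (e l) ⊗ₖ (1 : Matrix (Fin dB) (Fin dB) ℂ) with hQ
      have hcyc : (Q * ρ * Q * (A i ⊗ₖ B j)).trace
          = (ρ * (Q * (A i ⊗ₖ B j) * Q)).trace := by
        rw [Matrix.trace_mul_cycle (Q * ρ) Q (A i ⊗ₖ B j),
          Matrix.trace_mul_cycle (A i ⊗ₖ B j) (Q * ρ) Q,
          ← Matrix.mul_assoc (Q * (A i ⊗ₖ B j)) Q ρ, Matrix.trace_mul_comm]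
      have hQMQ : Q * (A i ⊗ₖ B j) * Q = (projOf (e l) * A i * projOf (e l)) ⊗ₖ B j := by
        rw [hQ, ← Matrix.mul_kronecker_mul, ← Matrix.mul_kronecker_mul, Matrix.one_mul,
          Matrix.mul_one]
      rw [hcyc, hQMQ]
    rw [Finset.sum_congr rfl fun l _ => hterm l]
    have hps : pinch e (A i) ⊗ₖ B j
        = ∑ l, (projOf (e l) * A i * projOf (e l)) ⊗ₖ B j := by
      rw [pinch, sum_kron]
    rw [hps, Finset.mul_sum, Matrix.trace_sum]
  have hc : (ρ * (pinch e (A i) ⊗ₖ B j)).trace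
      = ∑ s, ((((A s * pinch e (A i)).trace.re : ℝ)) : ℂ) * (ρ * (A s ⊗ₖ B j)).trace := by
    nth_rewrite 1 [pinch_expand hdA hA e i]
    have hks : (∑ s, ((((A s * pinch e (A i)).trace.re : ℝ)) : ℂ) • A s) ⊗ₖ B j
        = ∑ s, ((((A s * pinch e (A i)).trace.re : ℝ)) : ℂ) • (A s ⊗ₖ B j) := by
      rw [sum_kron]
      exact Finset.sum_congr rfl fun s _ => Matrix.smul_kronecker _ _ _
    rw [hks, Finset.mul_sum, Matrix.trace_sum]
    exact Finset.sum_congr rfl fun s _ => by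
      rw [Matrix.mul_smul, Matrix.trace_smul, smul_eq_mul]
  show (measured ρ e * (A i ⊗ₖ B j)).trace.re
      = ∑ s, Tmat A e i s * corrMat ρ A B s j
  rw [ha, hc, Complex.re_sum]
  exact Finset.sum_congr rfl fun s _ => by
    simp [corrMat, Tmat_apply, Complex.mul_re]

lemma T_symm {dA : ℕ} (A : Fin (dA ^ 2) → Matrix (Fin dA) (Fin dA) ℂ)
    (e : Fin dA → Fin dA → ℂ) :
    (Tmat A e)ᵀ = Tmat A e := by
  ext i s
  rw [Matrix.transpose_apply, Tmat_apply, Tmat_apply,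
    pinch_adjoint e (A i) (A s), Matrix.trace_mul_comm]

lemma T_idem {dA : ℕ} (hdA : 0 < dA) {A : Fin (dA ^ 2) → Matrix (Fin dA) (Fin dA) ℂ}
    (hA : IsHSOrthonormal A) {e : Fin dA → Fin dA → ℂ} (he : IsONFamily e) :
    Tmat A e * Tmat A e = Tmat A e := by
  ext i s
  rw [Matrix.mul_apply, Tmat_apply]
  simp only [Tmat_apply]
  show ∑ t, ((A t * pinch e (A i)).trace).re * ((A s * pinch e (A t)).trace).re
      = ((A s * pinch e (A i)).trace).re
  have key : (A s * pinch e (A i)).trace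
      = ∑ t, ((((A t * pinch e (A i)).trace.re : ℝ)) : ℂ) * (A s * pinch e (A t)).trace := by
    calc (A s * pinch e (A i)).trace
        = (A s * pinch e (pinch e (A i))).trace := by rw [pinch_pinch he]
      _ = (A s * pinch e (∑ t, ((((A t * pinch e (A i)).trace.re : ℝ)) : ℂ) • A t)).trace := by
          nth_rewrite 1 [pinch_expand hdA hA e i]
          rfl
      _ = ∑ t, ((((A t * pinch e (A i)).trace.re : ℝ)) : ℂ) * (A s * pinch e (A t)).trace := by
          rw [pinch_smul_sum, Finset.mul_sum, Matrix.trace_sum]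
          exact Finset.sum_congr rfl fun t _ => by
            rw [Matrix.mul_smul, Matrix.trace_smul, smul_eq_mul]
  have h2 := congrArg Complex.re key
  rw [Complex.re_sum] at h2
  rw [h2]
  exact Finset.sum_congr rfl fun t _ => by simp [Complex.mul_re]

lemma cmn_nonneg {r : ℕ} {σ : Fin r → ℝ} (h0 : ∀ k, 0 ≤ σ k) (h : ℕ) (p : ℝ) :
    0 ≤ CMN σ h p :=
  Real.rpow_nonneg
    (Finset.sum_nonneg fun R _ => Finset.prod_nonneg fun k _ => Real.rpow_nonneg (h0 k) p) _

lemma cmn_mono {r : ℕ} {σ σ' : Fin r → ℝ} (h0 : ∀ k, 0 ≤ σ' k)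
    (hle : ∀ k, σ' k ≤ σ k) (h : ℕ) {p : ℝ} (hp : 1 ≤ p) :
    CMN σ' h p ≤ CMN σ h p := by
  have hp0 : (0 : ℝ) ≤ p := le_trans zero_le_one hp
  unfold CMN
  apply Real.rpow_le_rpow
  · exact Finset.sum_nonneg fun R _ => Finset.prod_nonneg fun k _ =>
      Real.rpow_nonneg (h0 k) p
  · exact Finset.sum_le_sum fun R _ =>
      Finset.prod_le_prod (fun k _ => Real.rpow_nonneg (h0 k) p)
        (fun k _ => Real.rpow_le_rpow (h0 k) (hle k) hp0)
  · positivity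

end AuxGlue

/-- Projective measurements on Alice's side cannot increase the
Correlation Minor Norm: `M_{h,p}(Π[ρ]) ≤ M_{h,p}(ρ)` for every projective measurement
`Π`; consequently the CMN-based discord
`D^A_{h,p}(ρ) = M_{h,p}(ρ)^p − sup_Π M_{h,p}(Π[ρ])^p` is nonnegative. -/
theorem cmn_measurement_monotone_and_discord_nonneg
    (dA dB : ℕ) (hdA : 0 < dA) (hdB : 0 < dB)
    (h : ℕ) (hh1 : 1 ≤ h) (hh2 : h ≤ min dA dB ^ 2)
    (p : ℝ) (hp : 1 ≤ p)
    (A : Fin (dA ^ 2) → Matrix (Fin dA) (Fin dA) ℂ)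
    (B : Fin (dB ^ 2) → Matrix (Fin dB) (Fin dB) ℂ)
    (hA : IsHSOrthonormal A) (hB : IsHSOrthonormal B)
    (ρ : Matrix (Fin dA × Fin dB) (Fin dA × Fin dB) ℂ) (hρ : IsDensityMatrix ρ)
    (σ : Fin (min dA dB ^ 2) → ℝ)
    (hσ : IsSingularValues (corrMat ρ A B) σ) :
    (∀ e : Fin dA → (Fin dA → ℂ), IsONFamily e →
      ∀ σ' : Fin (min dA dB ^ 2) → ℝ,
        IsSingularValues (corrMat (measured ρ e) A B) σ' →
          CMN σ' h p ≤ CMN σ h p) ∧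
    0 ≤ CMN σ h p ^ p - sSup (measuredCMNSet ρ A B h p) := by
  classical
  have hrm : min dA dB ^ 2 ≤ dA ^ 2 := Nat.pow_le_pow_left (min_le_left _ _) 2
  have hrn : min dA dB ^ 2 ≤ dB ^ 2 := Nat.pow_le_pow_left (min_le_right _ _) 2
  have mono : ∀ e : Fin dA → (Fin dA → ℂ), IsONFamily e →
      ∀ σ' : Fin (min dA dB ^ 2) → ℝ,
        IsSingularValues (corrMat (measured ρ e) A B) σ' →
          CMN σ' h p ≤ CMN σ h p := by
    intro e he σ' hσ'
    have hTsym := T_symm A e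
    have hTidem := T_idem hdA hA he
    have hcontr := contraction_of_proj _ hTsym hTidem
    have hcm := corr_measured hdA A B hA ρ e
    rw [hcm] at hσ'
    have hsv := sv_le hrm hrn (corrMat ρ A B) _ hcontr hσ hσ'
    exact cmn_mono hσ'.1 hsv h hp
  refine ⟨mono, ?_⟩
  rw [sub_nonneg]
  apply Real.sSup_le
  · rintro x ⟨e, he, σ', hσ', rfl⟩
    exact Real.rpow_le_rpow (cmn_nonneg hσ'.1 h p) (mono e he σ' hσ')
      (le_trans zero_le_one hp)
  · exact Real.rpow_nonneg (cmn_nonneg hσ.1 h p) p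
end
end

section
/- For every density matrix ρ on ℂ^{d_A} ⊗ ℂ^{d_B}, the geometric quantum discord equals the CMN-based discord with h=1, p=2: D_G^A(ρ) = M_{1,2}(ρ)² − max_Π M_{1,2}(Π[ρ])², where the maximum is over all projective measurements Π on Alice's subsystem. -/
open Matrix Finset
open scoped Kronecker ComplexOrder

noncomputable section

/-! ### Auxiliary lemmas -/

section FrobSq

lemma frobSq_nonneg' {n : Type*} [Fintype n] (M : Matrix n n ℂ) : 0 ≤ frobSq M :=
  Finset.sum_nonneg fun _ _ => Finset.sum_nonneg fun _ _ => Complex.normSq_nonneg _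

lemma frobSq_eq_zero' {n : Type*} [Fintype n] {M : Matrix n n ℂ} (h : frobSq M = 0) : M = 0 := by
  ext i j
  have h1 := (Finset.sum_eq_zero_iff_of_nonneg (fun i (_ : i ∈ Finset.univ) =>
      Finset.sum_nonneg (fun j _ => Complex.normSq_nonneg (M i j)))).mp h i (Finset.mem_univ i)
  have h2 := (Finset.sum_eq_zero_iff_of_nonneg (fun j (_ : j ∈ Finset.univ) =>
      Complex.normSq_nonneg (M i j))).mp h1 j (Finset.mem_univ j)
  simpa using Complex.normSq_eq_zero.mp h2

lemma trace_conjTranspose_mul_self {n : Type*} [Fintype n] (X : Matrix n n ℂ) :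
    (Xᴴ * X).trace = (frobSq X : ℂ) := by
  have h : (Xᴴ * X).trace = ∑ j, ∑ i, (Complex.normSq (X i j) : ℂ) := by
    simp only [Matrix.trace, Matrix.diag_apply, Matrix.mul_apply, Matrix.conjTranspose_apply]
    exact Finset.sum_congr rfl fun j _ => Finset.sum_congr rfl fun i _ =>
      (Complex.normSq_eq_conj_mul_self).symm ▸ rfl
  rw [h, Finset.sum_comm]
  unfold frobSq
  push_cast
  rfl

lemma frobSq_re_eq {n : Type*} [Fintype n] (X : Matrix n n ℂ) :
    frobSq X = ((Xᴴ * X).trace).re := by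
  rw [trace_conjTranspose_mul_self, Complex.ofReal_re]

open scoped MatrixOrder in
lemma posSemidef_iff_eq_transpose_mul_self_aux {n : Type*} [Fintype n] [DecidableEq n]
    {M : Matrix n n ℂ} : M.PosSemidef ↔ ∃ B : Matrix n n ℂ, M = Bᴴ * B := by
  constructor
  · intro hM
    obtain ⟨B, hB⟩ := CStarAlgebra.nonneg_iff_eq_star_mul_self.mp hM.nonneg
    exact ⟨B, hB⟩
  · rintro ⟨B, rfl⟩
    exact Matrix.posSemidef_conjTranspose_mul_self B

lemma posSemidef_trace_spec {n : Type*} [Fintype n] [DecidableEq n] {M : Matrix n n ℂ}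
    (hM : M.PosSemidef) : ∃ t : ℝ, 0 ≤ t ∧ M.trace = (t : ℂ) ∧ (t = 0 → M = 0) := by
  obtain ⟨B, hB⟩ := posSemidef_iff_eq_transpose_mul_self_aux.mp hM
  refine ⟨frobSq B, frobSq_nonneg' B, by rw [hB, trace_conjTranspose_mul_self], fun h0 => ?_⟩
  rw [hB, frobSq_eq_zero' h0]
  simp

end FrobSq

section Kron

lemma kron_conjTranspose {m n : ℕ} (P : Matrix (Fin m) (Fin m) ℂ) (Q : Matrix (Fin n) (Fin n) ℂ) :
    (P ⊗ₖ Q)ᴴ = Pᴴ ⊗ₖ Qᴴ := by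
  ext i j
  simp [Matrix.conjTranspose_apply, Matrix.kroneckerMap_apply, mul_comm]

end Kron
section Parseval

set_option maxHeartbeats 1000000 in
lemma frobSq_eq_sum_corr {dA dB : ℕ} (hdA : 0 < dA) (hdB : 0 < dB)
    (A : Fin (dA ^ 2) → Matrix (Fin dA) (Fin dA) ℂ)
    (B : Fin (dB ^ 2) → Matrix (Fin dB) (Fin dB) ℂ)
    (hA : IsHSOrthonormal A) (hB : IsHSOrthonormal B)
    (X : Matrix (Fin dA × Fin dB) (Fin dA × Fin dB) ℂ) (hX : Xᴴ = X) :
    frobSq X = ∑ i, ∑ j, corrMat X A B i j ^ 2 := by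
  classical
  set M : Fin (dA ^ 2) × Fin (dB ^ 2) → Matrix (Fin dA × Fin dB) (Fin dA × Fin dB) ℂ :=
    fun p => A p.1 ⊗ₖ B p.2 with hM
  have hMo : ∀ p q, (M p * M q).trace = if p = q then 1 else 0 := by
    rintro ⟨i, j⟩ ⟨k, l⟩
    rw [hM]
    simp only
    rw [← Matrix.mul_kronecker_mul, Matrix.trace_kronecker, hA.2 i k, hB.2 j l]
    by_cases h1 : i = k <;> by_cases h2 : j = l <;> simp [h1, h2, Prod.ext_iff]
  have key : ∀ (c : Fin (dA ^ 2) × Fin (dB ^ 2) → ℂ) (q : Fin (dA ^ 2) × Fin (dB ^ 2)),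
      ((∑ p, c p • M p) * M q).trace = c q := by
    intro c q
    rw [Finset.sum_mul, Matrix.trace_sum]
    simp only [Matrix.smul_mul, Matrix.trace_smul]
    rw [Finset.sum_congr rfl (fun p (_ : p ∈ Finset.univ) => by rw [hMo p q])]
    simp
  have li : LinearIndependent ℂ M := by
    rw [Fintype.linearIndependent_iff]
    intro c hc q
    have h := key c q
    rw [hc, Matrix.zero_mul, Matrix.trace_zero] at h
    exact h.symm
  haveI : Nonempty (Fin (dA ^ 2) × Fin (dB ^ 2)) :=
    ⟨⟨⟨0, pow_pos hdA 2⟩, ⟨0, pow_pos hdB 2⟩⟩⟩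
  have hcard : Fintype.card (Fin (dA ^ 2) × Fin (dB ^ 2)) =
      Module.finrank ℂ (Matrix (Fin dA × Fin dB) (Fin dA × Fin dB) ℂ) := by
    rw [Module.finrank_matrix]
    simp [Fintype.card_prod]
    ring
  let b := basisOfLinearIndependentOfCardEqFinrank li hcard
  have hb : ⇑b = M := coe_basisOfLinearIndependentOfCardEqFinrank li hcard
  have hrepr : X = ∑ p, b.repr X p • M p := by
    conv_lhs => rw [← b.sum_repr X]
    simp only [hb]
  have hcoeff : ∀ q, b.repr X q = (X * M q).trace := by
    intro q
    conv_rhs => rw [hrepr]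
    rw [key]
  have hreal : ∀ q, (X * M q).trace = (((X * M q).trace).re : ℂ) := by
    intro q
    have hMh : (M q)ᴴ = M q := by
      rw [hM]
      simp only
      rw [kron_conjTranspose, hA.1 q.1, hB.1 q.2]
    have hc : (starRingEnd ℂ) ((X * M q).trace) = (X * M q).trace := by
      have h1 : (starRingEnd ℂ) ((X * M q).trace) = ((X * M q)ᴴ).trace := by
        rw [Matrix.trace_conjTranspose]
        rfl
      rw [h1, Matrix.conjTranspose_mul, hMh, hX, Matrix.trace_mul_comm]
    exact (Complex.conj_eq_iff_re.mp hc).symm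
  have hXX : (X * X).trace = ∑ p, (X * M p).trace * (X * M p).trace := by
    conv_lhs => rw [hrepr]
    rw [Finset.sum_mul, Matrix.trace_sum]
    refine Finset.sum_congr rfl fun p _ => ?_
    rw [Matrix.smul_mul, Matrix.trace_smul, Matrix.trace_mul_comm, key, hcoeff, smul_eq_mul]
  have hfrob : frobSq X = ((X * X).trace).re := by rw [frobSq_re_eq, hX]
  rw [hfrob, hXX, Complex.re_sum]
  rw [show (∑ i, ∑ j, corrMat X A B i j ^ 2)
      = ∑ p : Fin (dA ^ 2) × Fin (dB ^ 2), corrMat X A B p.1 p.2 ^ 2 from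
    (Fintype.sum_prod_type (f := fun p : Fin (dA ^ 2) × Fin (dB ^ 2) => corrMat X A B p.1 p.2 ^ 2)).symm]
  refine Finset.sum_congr rfl fun p _ => ?_
  rw [hreal p, ← Complex.ofReal_mul, Complex.ofReal_re]
  simp only [corrMat, hM, sq]

end Parseval
section SVSum

lemma trace_transpose_mul_self_real {a b : ℕ} (M : Matrix (Fin a) (Fin b) ℝ) :
    (Mᵀ * M).trace = ∑ i, ∑ j, M i j ^ 2 := by
  simp only [Matrix.trace, Matrix.diag_apply, Matrix.mul_apply, Matrix.transpose_apply, sq]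
  exact Finset.sum_comm

lemma svdDiag_sum_sq {m n r : ℕ} (hrm : r ≤ m) (hrn : r ≤ n) (σ : Fin r → ℝ) :
    ∑ i, ∑ j, svdDiag m n r σ i j ^ 2 = ∑ k, σ k ^ 2 := by
  have hrow : ∀ i : Fin m, ∑ j : Fin n, svdDiag m n r σ i j ^ 2 =
      if h : (i : ℕ) < r then σ ⟨i, h⟩ ^ 2 else 0 := by
    intro i
    by_cases h : (i : ℕ) < r
    · rw [dif_pos h]
      rw [Finset.sum_eq_single (⟨(i : ℕ), lt_of_lt_of_le h hrn⟩ : Fin n)]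
      · simp [svdDiag, h]
      · intro j _ hj
        have hne : ¬((i : ℕ) = (j : ℕ)) := by
          intro hc
          exact hj (by ext; exact hc.symm)
        simp [svdDiag, hne]
      · simp
    · rw [dif_neg h]
      apply Finset.sum_eq_zero
      intro j _
      have hne : ¬((i : ℕ) = (j : ℕ) ∧ (i : ℕ) < r) := fun hc => h hc.2
      simp [svdDiag, hne]
  rw [Finset.sum_congr rfl fun i (_ : i ∈ Finset.univ) => hrow i]
  rw [Fin.sum_univ_eq_sum_range (fun i => if h : i < r then σ ⟨i, h⟩ ^ 2 else 0) m]
  have h2 : ∑ k, σ k ^ 2 = ∑ k ∈ Finset.range r, (if h : k < r then σ ⟨k, h⟩ ^ 2 else 0) := by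
    rw [← Fin.sum_univ_eq_sum_range (fun i => if h : i < r then σ ⟨i, h⟩ ^ 2 else 0) r]
    exact Finset.sum_congr rfl fun k _ => by rw [dif_pos k.2]
  rw [h2]
  exact (Finset.sum_subset (Finset.range_subset_range.mpr hrm)
    (fun x _ hx => dif_neg (by simpa using hx))).symm

lemma isSingularValues_sum_sq {m n r : ℕ} (hrm : r ≤ m) (hrn : r ≤ n)
    {C : Matrix (Fin m) (Fin n) ℝ} {σ : Fin r → ℝ} (hσ : IsSingularValues C σ) :
    ∑ k, σ k ^ 2 = ∑ i, ∑ j, C i j ^ 2 := by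
  obtain ⟨-, -, U, V, hU, hV, hC⟩ := hσ
  have hD : ∃ D, D = svdDiag m n r σ := ⟨_, rfl⟩
  obtain ⟨D, hD⟩ := hD
  rw [← hD] at hC
  have h1 : Cᵀ * C = V * ((Dᵀ * D) * Vᵀ) := by
    rw [hC]
    simp only [Matrix.transpose_mul, Matrix.transpose_transpose, Matrix.mul_assoc]
    rw [← Matrix.mul_assoc Uᵀ U, hU, Matrix.one_mul]
  have h2 : (Cᵀ * C).trace = (Dᵀ * D).trace := by
    rw [h1, Matrix.trace_mul_comm, Matrix.mul_assoc, hV, Matrix.mul_one]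
  rw [← trace_transpose_mul_self_real, h2, trace_transpose_mul_self_real, hD,
    svdDiag_sum_sq hrm hrn]

end SVSum

section CMNlemmas

lemma cmn_one_two_sq {r : ℕ} (σ : Fin r → ℝ) :
    CMN σ 1 2 ^ (2 : ℝ) = ∑ k, σ k ^ 2 := by
  have hsum : ∑ R ∈ Finset.univ.powersetCard 1, ∏ k ∈ R, σ k ^ (2 : ℝ) = ∑ k, σ k ^ 2 := by
    rw [Finset.powersetCard_one, Finset.sum_map]
    refine Finset.sum_congr rfl fun k _ => ?_
    rw [show ((⟨singleton, Finset.singleton_injective⟩ : Function.Embedding _ _) k) = {k} from rfl,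
      Finset.prod_singleton]
    rw [show (2 : ℝ) = ((2 : ℕ) : ℝ) by norm_num, Real.rpow_natCast]
  unfold CMN
  rw [hsum]
  have hnn : 0 ≤ ∑ k, σ k ^ 2 := Finset.sum_nonneg fun k _ => sq_nonneg _
  rw [← Real.rpow_mul hnn]
  norm_num

end CMNlemmas
section Measurement

variable {dA dB : ℕ}

/-- The local projector `|e_l⟩⟨e_l| ⊗ 𝟙`. -/
def Qop (e : Fin dA → Fin dA → ℂ) (l : Fin dA) :
    Matrix (Fin dA × Fin dB) (Fin dA × Fin dB) ℂ :=
  projOf (e l) ⊗ₖ (1 : Matrix (Fin dB) (Fin dB) ℂ)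

lemma measured_eq (ρ : Matrix (Fin dA × Fin dB) (Fin dA × Fin dB) ℂ)
    (e : Fin dA → Fin dA → ℂ) :
    measured ρ e = ∑ l, Qop e l * ρ * Qop e l := rfl

lemma projOf_conjTranspose (v : Fin dA → ℂ) : (projOf v)ᴴ = projOf v := by
  ext i j
  simp [projOf, Matrix.conjTranspose_apply, Matrix.vecMulVec_apply, mul_comm]

lemma projOf_mul {e : Fin dA → Fin dA → ℂ} (he : IsONFamily e) (l m : Fin dA) :
    projOf (e l) * projOf (e m) = if l = m then projOf (e l) else 0 := by
  have key : projOf (e l) * projOf (e m) =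
      (star (e l) ⬝ᵥ e m) • Matrix.vecMulVec (e l) (star (e m)) := by
    ext i j
    simp only [Matrix.mul_apply, projOf, Matrix.vecMulVec_apply, Matrix.smul_apply,
      dotProduct, smul_eq_mul, Finset.sum_mul]
    exact Finset.sum_congr rfl fun k _ => by simp only [Pi.star_apply]; ring
  rw [key, he l m]
  split_ifs with h
  · subst h; rw [one_smul]; rfl
  · rw [zero_smul]

lemma projOf_trace {e : Fin dA → Fin dA → ℂ} (he : IsONFamily e) (l : Fin dA) :
    (projOf (e l)).trace = 1 := by
  have h := he l l
  rw [if_pos rfl] at h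
  simp only [dotProduct, Pi.star_apply] at h
  simpa [projOf, Matrix.trace, Matrix.vecMulVec_apply, mul_comm] using h

lemma projOf_sum_one {e : Fin dA → Fin dA → ℂ} (he : IsONFamily e) :
    ∑ l, projOf (e l) = 1 := by
  classical
  set E : Matrix (Fin dA) (Fin dA) ℂ := Matrix.of fun a l => e l a with hE
  have hEE : Eᴴ * E = 1 := by
    ext l m
    have h := he l m
    simpa [Matrix.mul_apply, Matrix.conjTranspose_apply, hE, dotProduct,
      Matrix.one_apply] using h
  have hEE' : E * Eᴴ = 1 := mul_eq_one_comm.mp hEE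
  ext a b
  rw [Matrix.sum_apply]
  have h2 : (E * Eᴴ) a b = ∑ l, projOf (e l) a b := by
    simp [Matrix.mul_apply, Matrix.conjTranspose_apply, hE, projOf, Matrix.vecMulVec_apply]
  rw [← h2, hEE']

lemma Qop_conjTranspose (e : Fin dA → Fin dA → ℂ) (l : Fin dA) :
    (Qop (dB := dB) e l)ᴴ = Qop e l := by
  rw [Qop, kron_conjTranspose, projOf_conjTranspose, Matrix.conjTranspose_one]

lemma Qop_mul {e : Fin dA → Fin dA → ℂ} (he : IsONFamily e) (l m : Fin dA) :
    Qop (dB := dB) e l * Qop e m = if l = m then Qop e l else 0 := by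
  rw [Qop, Qop, ← Matrix.mul_kronecker_mul, projOf_mul he, Matrix.one_mul]
  split_ifs with h
  · rfl
  · rw [Matrix.zero_kronecker]

lemma Qop_sum {e : Fin dA → Fin dA → ℂ} (he : IsONFamily e) :
    ∑ l, Qop (dB := dB) e l = 1 := by
  have h : ∑ l, Qop (dB := dB) e l = (∑ l, projOf (e l)) ⊗ₖ (1 : Matrix (Fin dB) (Fin dB) ℂ) := by
    ext ⟨a, b⟩ ⟨c, d⟩
    simp [Qop, Matrix.sum_apply, Matrix.kroneckerMap_apply, Finset.sum_mul]
  rw [h, projOf_sum_one he, Matrix.one_kronecker_one]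

lemma measured_sub (X Y : Matrix (Fin dA × Fin dB) (Fin dA × Fin dB) ℂ)
    (e : Fin dA → Fin dA → ℂ) :
    measured (X - Y) e = measured X e - measured Y e := by
  simp only [measured_eq, Matrix.mul_sub, Matrix.sub_mul, ← Finset.sum_sub_distrib]

lemma measured_idem {e : Fin dA → Fin dA → ℂ} (he : IsONFamily e)
    (X : Matrix (Fin dA × Fin dB) (Fin dA × Fin dB) ℂ) :
    measured (measured X e) e = measured X e := by
  simp only [measured_eq, Finset.mul_sum, Finset.sum_mul]
  refine Finset.sum_congr rfl fun l _ => ?_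
  rw [Finset.sum_eq_single l]
  · rw [show Qop (dB := dB) e l * (Qop e l * X * Qop e l) * Qop e l
        = (Qop e l * Qop e l) * X * (Qop e l * Qop e l) by
      simp only [Matrix.mul_assoc]]
    rw [Qop_mul he, if_pos rfl]
  · intro m _ hm
    rw [show Qop (dB := dB) e l * (Qop e m * X * Qop e m) * Qop e l
        = (Qop e l * Qop e m) * X * (Qop e m * Qop e l) by
      simp only [Matrix.mul_assoc]]
    rw [Qop_mul he, if_neg (by exact fun hc => hm hc.symm), Qop_mul he,
      if_neg (by exact fun hc => hm hc), Matrix.zero_mul, Matrix.mul_zero]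
  · simp

lemma measured_herm {e : Fin dA → Fin dA → ℂ}
    {X : Matrix (Fin dA × Fin dB) (Fin dA × Fin dB) ℂ} (hX : Xᴴ = X) :
    (measured X e)ᴴ = measured X e := by
  simp only [measured_eq, Matrix.conjTranspose_sum, Matrix.conjTranspose_mul,
    Qop_conjTranspose, hX]
  refine Finset.sum_congr rfl fun l _ => ?_
  simp only [Matrix.mul_assoc]

lemma measured_adj (e : Fin dA → Fin dA → ℂ)
    (X Y : Matrix (Fin dA × Fin dB) (Fin dA × Fin dB) ℂ) :
    ((measured X e)ᴴ * Y).trace = (Xᴴ * measured Y e).trace := by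
  have cyc : ∀ Q Z W : Matrix (Fin dA × Fin dB) (Fin dA × Fin dB) ℂ,
      ((Q * (Z * Q)) * W).trace = (Z * (Q * W * Q)).trace := by
    intro Q Z W
    rw [Matrix.trace_mul_comm, show W * (Q * (Z * Q)) = (W * Q) * (Z * Q) by
      simp only [Matrix.mul_assoc], Matrix.trace_mul_comm]
    simp only [Matrix.mul_assoc]
  rw [measured_eq, measured_eq, Matrix.conjTranspose_sum, Finset.sum_mul, Finset.mul_sum,
    Matrix.trace_sum, Matrix.trace_sum]
  refine Finset.sum_congr rfl fun l _ => ?_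
  rw [Matrix.conjTranspose_mul, Matrix.conjTranspose_mul, Qop_conjTranspose]
  exact cyc _ _ _

lemma measured_trace {e : Fin dA → Fin dA → ℂ} (he : IsONFamily e)
    (X : Matrix (Fin dA × Fin dB) (Fin dA × Fin dB) ℂ) :
    (measured X e).trace = X.trace := by
  rw [measured_eq, Matrix.trace_sum]
  have h : ∀ l, (Qop (dB := dB) e l * X * Qop e l).trace = (X * Qop e l).trace := by
    intro l
    rw [Matrix.mul_assoc, Matrix.trace_mul_comm, Matrix.mul_assoc]
    congr 1
    rw [Qop_mul he, if_pos rfl]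
  rw [Finset.sum_congr rfl fun l (_ : l ∈ Finset.univ) => h l, ← Matrix.trace_sum]
  rw [← Finset.mul_sum, Qop_sum he, Matrix.mul_one]

end Measurement
section Pythagoras

variable {dA dB : ℕ}

lemma frobSq_add_of_ortho {e : Fin dA → Fin dA → ℂ}
    {X Y : Matrix (Fin dA × Fin dB) (Fin dA × Fin dB) ℂ}
    (hX : measured X e = 0) (hY : measured Y e = Y) :
    frobSq (X + Y) = frobSq X + frobSq Y := by
  have hXY : (Xᴴ * Y).trace = 0 := by
    conv_lhs => rw [← hY]
    rw [← measured_adj, hX]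
    simp
  have hYX : (Yᴴ * X).trace = 0 := by
    have h : Yᴴ * X = (Xᴴ * Y)ᴴ := by
      rw [Matrix.conjTranspose_mul, Matrix.conjTranspose_conjTranspose]
    rw [h, Matrix.trace_conjTranspose, hXY, star_zero]
  rw [frobSq_re_eq, frobSq_re_eq, frobSq_re_eq, Matrix.conjTranspose_add, Matrix.add_mul,
    Matrix.mul_add, Matrix.mul_add, Matrix.trace_add, Matrix.trace_add, Matrix.trace_add,
    hXY, hYX]
  simp

lemma measured_proj_kron {e : Fin dA → Fin dA → ℂ} (he : IsONFamily e) (l : Fin dA)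
    (τ : Matrix (Fin dB) (Fin dB) ℂ) :
    measured (projOf (e l) ⊗ₖ τ) e = projOf (e l) ⊗ₖ τ := by
  rw [measured_eq, Finset.sum_eq_single l]
  · rw [Qop, ← Matrix.mul_kronecker_mul, ← Matrix.mul_kronecker_mul,
      projOf_mul he, if_pos rfl, projOf_mul he, if_pos rfl, Matrix.one_mul, Matrix.mul_one]
  · intro m _ hm
    rw [Qop, ← Matrix.mul_kronecker_mul, projOf_mul he, if_neg hm,
      Matrix.zero_kronecker, Matrix.zero_mul]
  · simp

lemma measured_smul (c : ℂ) (X : Matrix (Fin dA × Fin dB) (Fin dA × Fin dB) ℂ)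
    (e : Fin dA → Fin dA → ℂ) :
    measured (c • X) e = c • measured X e := by
  simp only [measured_eq, Matrix.mul_smul, Matrix.smul_mul, ← Finset.smul_sum]

lemma measured_sum {ι : Type*} (s : Finset ι)
    (f : ι → Matrix (Fin dA × Fin dB) (Fin dA × Fin dB) ℂ) (e : Fin dA → Fin dA → ℂ) :
    measured (∑ i ∈ s, f i) e = ∑ i ∈ s, measured (f i) e := by
  simp only [measured_eq, Finset.mul_sum, Finset.sum_mul]
  exact Finset.sum_comm

lemma measured_fix_cq {χ : Matrix (Fin dA × Fin dB) (Fin dA × Fin dB) ℂ}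
    {e : Fin dA → Fin dA → ℂ} (he : IsONFamily e)
    (q : Fin dA → ℝ) (τ : Fin dA → Matrix (Fin dB) (Fin dB) ℂ)
    (hχ : χ = ∑ l, (q l : ℂ) • (projOf (e l) ⊗ₖ τ l)) :
    measured χ e = χ := by
  rw [hχ, measured_sum]
  refine Finset.sum_congr rfl fun l _ => ?_
  rw [measured_smul, measured_proj_kron he]

end Pythagoras

section Density

/-- The isometry `F_l : ℂ^{d_B} → ℂ^{d_A} ⊗ ℂ^{d_B}`, `|ξ⟩ ↦ |e_l⟩⊗|ξ⟩`. -/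
def Fop {dA dB : ℕ} (e : Fin dA → Fin dA → ℂ) (l : Fin dA) :
    Matrix (Fin dA × Fin dB) (Fin dB) ℂ :=
  Matrix.of fun p d => e l p.1 * (if p.2 = d then 1 else 0)

lemma F_mul_mul {dA dB : ℕ} (e : Fin dA → Fin dA → ℂ) (l : Fin dA)
    (N : Matrix (Fin dB) (Fin dB) ℂ) :
    Fop (dB := dB) e l * N * (Fop (dB := dB) e l)ᴴ = projOf (e l) ⊗ₖ N := by
  ext ⟨a, b⟩ ⟨c, d⟩
  have h1 : ∀ d' : Fin dB, (Fop (dB := dB) e l * N : Matrix (Fin dA × Fin dB) (Fin dB) ℂ) (a, b) d'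
      = e l a * N b d' := by
    intro d'
    rw [Matrix.mul_apply, Finset.sum_eq_single b]
    · simp [Fop]
    · intro b' _ hb'
      have : ¬((b : Fin dB) = b') := fun hc => hb' hc.symm
      simp [Fop, this]
    · simp
  rw [Matrix.mul_apply]
  simp only [Matrix.conjTranspose_apply]
  have h2 : ∑ d', (Fop (dB := dB) e l * N : Matrix (Fin dA × Fin dB) (Fin dB) ℂ) (a, b) d' *
        star (Fop e l (c, d) d')
      = ∑ d', (e l a * N b d') * star (Fop e l (c, d) d') :=
    Finset.sum_congr rfl fun d' _ => by rw [h1]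
  rw [h2, Finset.sum_eq_single d]
  · simp only [Fop, Matrix.of_apply, Matrix.kroneckerMap_apply, projOf,
      Matrix.vecMulVec_apply, Pi.star_apply]
    simp only [if_pos rfl, if_true, mul_one]
    ring
  · intro d' _ hd'
    have : ¬((d : Fin dB) = d') := fun hc => hd' hc.symm
    simp [Fop, this]
  · simp

lemma F_mul_Fh {dA dB : ℕ} (e : Fin dA → Fin dA → ℂ) (l : Fin dA) :
    Fop (dB := dB) e l * (Fop (dB := dB) e l)ᴴ = Qop e l := by
  have h := F_mul_mul (dB := dB) e l 1
  rwa [Matrix.mul_one] at h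

lemma Qop_rho_Qop {dA dB : ℕ} (e : Fin dA → Fin dA → ℂ) (l : Fin dA)
    (ρ : Matrix (Fin dA × Fin dB) (Fin dA × Fin dB) ℂ) :
    Qop e l * ρ * Qop e l = projOf (e l) ⊗ₖ ((Fop (dB := dB) e l)ᴴ * ρ * Fop (dB := dB) e l) := by
  rw [← F_mul_Fh, ← F_mul_mul]
  simp only [Matrix.mul_assoc]

lemma smul_one_density {dB : ℕ} (hdB : 0 < dB) :
    IsDensityMatrix ((dB : ℂ)⁻¹ • (1 : Matrix (Fin dB) (Fin dB) ℂ)) := by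
  constructor
  · refine posSemidef_iff_eq_transpose_mul_self_aux.mpr
      ⟨((Real.sqrt (dB : ℝ)⁻¹ : ℝ) : ℂ) • 1, ?_⟩
    rw [Matrix.conjTranspose_smul, Matrix.conjTranspose_one, Matrix.smul_mul,
      Matrix.mul_smul, Matrix.one_mul, smul_smul]
    congr 1
    rw [Complex.star_def, Complex.conj_ofReal, ← Complex.ofReal_mul,
      Real.mul_self_sqrt (inv_nonneg.mpr (Nat.cast_nonneg _)), Complex.ofReal_inv]
    norm_num
  · rw [Matrix.trace_smul, Matrix.trace_one, smul_eq_mul]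
    rw [show ((Fintype.card (Fin dB) : ℂ)) = ((dB : ℕ) : ℂ) by simp]
    rw [inv_mul_cancel₀ (Nat.cast_ne_zero.mpr hdB.ne')]

lemma smul_psd_density {n : Type*} [Fintype n] [DecidableEq n] {N : Matrix n n ℂ}
    (hN : N.PosSemidef) {t : ℝ} (ht0 : 0 ≤ t) (htr : N.trace = (t : ℂ)) (htne : t ≠ 0) :
    IsDensityMatrix ((t : ℂ)⁻¹ • N) := by
  constructor
  · obtain ⟨B, hB⟩ := posSemidef_iff_eq_transpose_mul_self_aux.mp hN
    refine posSemidef_iff_eq_transpose_mul_self_aux.mpr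
      ⟨((Real.sqrt t⁻¹ : ℝ) : ℂ) • B, ?_⟩
    rw [hB, Matrix.conjTranspose_smul, Matrix.smul_mul, Matrix.mul_smul, smul_smul]
    congr 1
    rw [Complex.star_def, Complex.conj_ofReal, ← Complex.ofReal_mul,
      Real.mul_self_sqrt (inv_nonneg.mpr ht0), Complex.ofReal_inv]
  · rw [Matrix.trace_smul, htr, smul_eq_mul,
      inv_mul_cancel₀ (Complex.ofReal_ne_zero.mpr htne)]

lemma measured_isCQ {dA dB : ℕ} (hdB : 0 < dB) {e : Fin dA → Fin dA → ℂ} (he : IsONFamily e)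
    {ρ : Matrix (Fin dA × Fin dB) (Fin dA × Fin dB) ℂ} (hρ : IsDensityMatrix ρ) :
    IsCQState (measured ρ e) := by
  classical
  obtain ⟨hρPSD, hρtr⟩ := hρ
  set N : Fin dA → Matrix (Fin dB) (Fin dB) ℂ := fun l => (Fop (dB := dB) e l)ᴴ * ρ * Fop (dB := dB) e l with hN
  have hNpsd : ∀ l, (N l).PosSemidef := fun l => hρPSD.conjTranspose_mul_mul_same (Fop e l)
  choose t ht0 htr hzero using fun l => posSemidef_trace_spec (hNpsd l)
  have hme : measured ρ e = ∑ l, projOf (e l) ⊗ₖ N l := by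
    rw [measured_eq]
    exact Finset.sum_congr rfl fun l _ => Qop_rho_Qop e l ρ
  have htsum : ∑ l, t l = 1 := by
    have h1 : (measured ρ e).trace = 1 := by rw [measured_trace he, hρtr]
    rw [hme, Matrix.trace_sum] at h1
    have h2 : ∀ l, (projOf (e l) ⊗ₖ N l).trace = (t l : ℂ) := by
      intro l
      rw [Matrix.trace_kronecker, projOf_trace he, one_mul, htr]
    rw [Finset.sum_congr rfl fun l (_ : l ∈ Finset.univ) => h2 l] at h1
    have h3 : ((∑ l, t l : ℝ) : ℂ) = 1 := by push_cast; exact h1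
    exact_mod_cast h3
  set τ : Fin dA → Matrix (Fin dB) (Fin dB) ℂ :=
    fun l => if h : t l = 0 then (dB : ℂ)⁻¹ • 1 else ((t l : ℝ) : ℂ)⁻¹ • N l with hτ
  refine ⟨e, he, t, τ, ht0, htsum, fun l => ?_, ?_⟩
  · simp only [hτ]
    by_cases h : t l = 0
    · rw [dif_pos h]; exact smul_one_density hdB
    · rw [dif_neg h]; exact smul_psd_density (hNpsd l) (ht0 l) (htr l) h
  · rw [hme]
    refine Finset.sum_congr rfl fun l _ => ?_
    simp only [hτ]
    by_cases h : t l = 0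
    · rw [dif_pos h, hzero l h, Matrix.kronecker_zero, h]
      simp
    · rw [dif_neg h, Matrix.kronecker_smul, smul_smul,
        mul_inv_cancel₀ (Complex.ofReal_ne_zero.mpr h), one_smul]

end Density

lemma std_isON (dA : ℕ) : IsONFamily (fun l : Fin dA => (Pi.single l 1 : Fin dA → ℂ)) := by
  intro k l
  classical
  simp only [dotProduct, Pi.star_apply, Pi.single_apply]
  simp [apply_ite (starRingEnd ℂ), Finset.sum_ite_eq, eq_comm]
section SVDexists

lemma svdDiag_transpose {m n r : ℕ} (σ : Fin r → ℝ) :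
    (svdDiag n m r σ)ᵀ = svdDiag m n r σ := by
  ext i j
  simp only [Matrix.transpose_apply, svdDiag]
  by_cases h1 : (i : ℕ) = (j : ℕ)
  · by_cases h2 : (i : ℕ) < r
    · rw [dif_pos ⟨h1.symm, h1 ▸ h2⟩, dif_pos ⟨h1, h2⟩]
      exact congrArg σ (Fin.ext h1.symm)
    · rw [dif_neg (fun hc => h2 (h1 ▸ hc.2)), dif_neg (fun hc => h2 hc.2)]
  · rw [dif_neg (fun hc => h1 (hc.1.symm)), dif_neg (fun hc => h1 hc.1)]

lemma exists_svd_aux {m n : ℕ} (hnm : n ≤ m) (C : Matrix (Fin m) (Fin n) ℝ) :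
    ∃ σ : Fin n → ℝ, (∀ k, 0 ≤ σ k) ∧ Antitone σ ∧
      ∃ U : Matrix (Fin m) (Fin m) ℝ, ∃ V : Matrix (Fin n) (Fin n) ℝ,
        Uᵀ * U = 1 ∧ Vᵀ * V = 1 ∧ C = U * svdDiag m n n σ * Vᵀ := by
  classical
  have hG : (Cᵀ * C).PosSemidef := by
    rw [← Matrix.conjTranspose_eq_transpose_of_trivial]
    exact Matrix.posSemidef_conjTranspose_mul_self C
  have hGh : (Cᵀ * C).IsHermitian := hG.isHermitian
  set W : Matrix (Fin n) (Fin n) ℝ :=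
    (Matrix.IsHermitian.eigenvectorUnitary hGh : Matrix (Fin n) (Fin n) ℝ) with hWdef
  have hWW : Wᵀ * W = 1 := by
    have h := Matrix.mem_unitaryGroup_iff'.mp (Matrix.IsHermitian.eigenvectorUnitary hGh).2
    rwa [Matrix.star_eq_conjTranspose, Matrix.conjTranspose_eq_transpose_of_trivial] at h
  set μ : Fin n → ℝ := hGh.eigenvalues with hμdef
  have hμ0 : ∀ k, 0 ≤ μ k := hG.eigenvalues_nonneg
  have hspec : Cᵀ * C = W * Matrix.diagonal μ * Wᵀ := by
    have h := hGh.spectral_theorem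
    rw [Unitary.conjStarAlgAut_apply] at h
    rwa [Matrix.star_eq_conjTranspose, Matrix.conjTranspose_eq_transpose_of_trivial,
      RCLike.ofReal_real_eq_id, Function.id_comp] at h
  -- sort the eigenvalues decreasingly
  set π : Equiv.Perm (Fin n) := Tuple.sort (fun k => -μ k) with hπdef
  set lam : Fin n → ℝ := μ ∘ π with hlamdef
  have hlam0 : ∀ k, 0 ≤ lam k := fun k => hμ0 (π k)
  have hanti : Antitone lam := by
    intro a b hab
    have h := Tuple.monotone_sort (fun k => -μ k) hab
    simp only [Function.comp_apply] at h
    simp only [hlamdef, Function.comp_apply]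
    linarith
  set V : Matrix (Fin n) (Fin n) ℝ := W.submatrix id π with hVdef
  have hVV : Vᵀ * V = 1 := by
    ext k l
    have h : (Vᵀ * V) k l = (Wᵀ * W) (π k) (π l) := by
      simp [hVdef, Matrix.mul_apply, Matrix.transpose_apply, Matrix.submatrix_apply]
    rw [h, hWW]
    simp [Matrix.one_apply, Equiv.apply_eq_iff_eq]
  have hVVt : V * Vᵀ = 1 := mul_eq_one_comm.mp hVV
  have hdiag : ∀ (Z : Matrix (Fin n) (Fin n) ℝ) (d : Fin n → ℝ) (a b : Fin n),
      (Z * Matrix.diagonal d * Zᵀ) a b = ∑ j, Z a j * d j * Z b j := by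
    intro Z d a b
    rw [Matrix.mul_apply]
    exact Finset.sum_congr rfl fun x _ => by
      rw [Matrix.mul_diagonal, Matrix.transpose_apply]
  have hspec2 : Cᵀ * C = V * Matrix.diagonal lam * Vᵀ := by
    rw [hspec]
    ext a b
    rw [hdiag, hdiag]
    exact (Equiv.sum_comp π (fun j => W a j * μ j * W b j)).symm
  set σ' : Fin n → ℝ := fun k => Real.sqrt (lam k) with hσ'def
  have hσ'0 : ∀ k, 0 ≤ σ' k := fun k => Real.sqrt_nonneg _
  have hσ'anti : Antitone σ' := fun a b hab => Real.sqrt_le_sqrt (hanti hab)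
  have hσ'sq : ∀ k, σ' k * σ' k = lam k := fun k => Real.mul_self_sqrt (hlam0 k)
  set W' : Matrix (Fin m) (Fin n) ℝ := C * V with hW'def
  have key2 : Vᵀ * (Cᵀ * C) * V = Matrix.diagonal lam := by
    rw [hspec2]
    simp only [Matrix.mul_assoc]
    rw [hVV, Matrix.mul_one, ← Matrix.mul_assoc, hVV, Matrix.one_mul]
  have hW'2 : W'ᵀ * W' = Matrix.diagonal lam := by
    rw [← key2, hW'def, Matrix.transpose_mul]
    simp only [Matrix.mul_assoc]
  have hcol : ∀ k k' : Fin n, ∑ j, W' j k * W' j k' = Matrix.diagonal lam k k' := by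
    intro k k'
    rw [← hW'2]
    simp [Matrix.mul_apply, Matrix.transpose_apply]
  -- build the orthonormal family of normalized columns
  set v : Fin m → EuclideanSpace ℝ (Fin m) := fun i =>
    if h : (i : ℕ) < n then
      (σ' ⟨i, h⟩)⁻¹ • (WithLp.equiv 2 (Fin m → ℝ)).symm (fun j => W' j ⟨i, h⟩)
    else 0 with hvdef
  have hv_apply : ∀ (i : Fin m) (h : (i : ℕ) < n) (j : Fin m),
      v i j = (σ' ⟨i, h⟩)⁻¹ * W' j ⟨i, h⟩ := by
    intro i h j
    simp only [hvdef, dif_pos h, PiLp.smul_apply, WithLp.equiv_symm_apply, PiLp.toLp_apply, smul_eq_mul]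
  have hip : ∀ x y : EuclideanSpace ℝ (Fin m), (inner ℝ x y : ℝ) = ∑ j, x j * y j := by
    intro x y
    rw [PiLp.inner_apply]
    simp [RCLike.inner_apply, starRingEnd_apply]
    exact Finset.sum_congr rfl fun _ _ => mul_comm _ _
  set s : Set (Fin m) := {i | ∃ h : (i : ℕ) < n, σ' ⟨i, h⟩ ≠ 0} with hsdef
  have hv : Orthonormal ℝ (s.restrict v) := by
    rw [orthonormal_iff_ite]
    rintro ⟨i, hi, hσi⟩ ⟨i', hi', hσi'⟩
    rw [hip]
    rw [Finset.sum_congr rfl fun j (_ : j ∈ Finset.univ) => by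
      simp only [Set.restrict, Set.domRestrict_apply]
      rw [hv_apply i hi j, hv_apply i' hi' j]]
    have hsum : ∑ j, ((σ' ⟨i, hi⟩)⁻¹ * W' j ⟨i, hi⟩) * ((σ' ⟨i', hi'⟩)⁻¹ * W' j ⟨i', hi'⟩)
        = (σ' ⟨i, hi⟩)⁻¹ * (σ' ⟨i', hi'⟩)⁻¹ * Matrix.diagonal lam ⟨i, hi⟩ ⟨i', hi'⟩ := by
      rw [← hcol, Finset.mul_sum]
      exact Finset.sum_congr rfl fun j _ => by ring
    rw [hsum]
    by_cases hii : i = i'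
    · subst hii
      rw [if_pos rfl]
      rw [Matrix.diagonal_apply_eq, ← hσ'sq]
      have hne := hσi
      field_simp
    · rw [if_neg (by simp [Subtype.ext_iff, hii])]
      rw [Matrix.diagonal_apply_ne _ (by simp [Fin.ext_iff]; exact fun hc => hii (Fin.ext hc))]
      ring
  obtain ⟨b, hb⟩ := hv.exists_orthonormalBasis_extension_of_card_eq
    (by simp [finrank_euclideanSpace])
  set U : Matrix (Fin m) (Fin m) ℝ := Matrix.of fun j i => b i j with hUdef
  have hbo := b.orthonormal
  rw [orthonormal_iff_ite] at hbo
  have hU : Uᵀ * U = 1 := by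
    ext i i'
    have h := hbo i i'
    rw [hip] at h
    simpa [hUdef, Matrix.mul_apply, Matrix.transpose_apply, Matrix.one_apply] using h
  refine ⟨σ', hσ'0, hσ'anti, U, V, hU, hVV, ?_⟩
  have hCW : C = W' * Vᵀ := by
    rw [hW'def, Matrix.mul_assoc, hVVt, Matrix.mul_one]
  have hWUD : W' = U * svdDiag m n n σ' := by
    ext j k
    rw [Matrix.mul_apply, Finset.sum_eq_single (⟨(k : ℕ), lt_of_lt_of_le k.2 hnm⟩ : Fin m)]
    · have hDk : svdDiag m n n σ' (⟨(k : ℕ), lt_of_lt_of_le k.2 hnm⟩ : Fin m) k = σ' k := by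
        simp [svdDiag, k.2]
      rw [hDk]
      by_cases hσk : σ' k = 0
      · have hWk : W' j k = 0 := by
          have h0 : ∑ j', W' j' k * W' j' k = 0 := by
            rw [hcol k k, Matrix.diagonal_apply_eq, ← hσ'sq, hσk, mul_zero]
          have h1 := (Finset.sum_eq_zero_iff_of_nonneg
            (fun j' (_ : j' ∈ Finset.univ) => mul_self_nonneg (W' j' k))).mp h0 j
            (Finset.mem_univ j)
          exact mul_self_eq_zero.mp h1
        rw [hWk, hσk, mul_zero]
      · have hks : (⟨(k : ℕ), lt_of_lt_of_le k.2 hnm⟩ : Fin m) ∈ s := by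
          refine ⟨k.2, ?_⟩
          simpa using hσk
        have hbk := hb _ hks
        have hvk := hv_apply (⟨(k : ℕ), lt_of_lt_of_le k.2 hnm⟩ : Fin m) k.2 j
        have hUja : U j (⟨(k : ℕ), lt_of_lt_of_le k.2 hnm⟩ : Fin m)
            = b (⟨(k : ℕ), lt_of_lt_of_le k.2 hnm⟩ : Fin m) j := rfl
        rw [hUja, hbk, hvk,
          show (⟨((⟨(k : ℕ), lt_of_lt_of_le k.2 hnm⟩ : Fin m) : ℕ), k.2⟩ : Fin n) = k from
            Fin.ext rfl]
        field_simp
    · intro i _ hi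
      have hne : ¬((i : ℕ) = (k : ℕ)) := by
        intro hc
        exact hi (Fin.ext hc)
      simp [svdDiag, hne]
    · simp
  rw [hCW, hWUD]

lemma exists_svd {m n r : ℕ} (hr : r = min m n) (C : Matrix (Fin m) (Fin n) ℝ) :
    ∃ σ : Fin r → ℝ, IsSingularValues C σ := by
  subst hr
  rcases le_total n m with h | h
  · rw [min_eq_right h]
    obtain ⟨σ, h0, hanti, U, V, hU, hV, hC⟩ := exists_svd_aux h C
    exact ⟨σ, h0, hanti, U, V, hU, hV, hC⟩
  · rw [min_eq_left h]
    obtain ⟨σ, h0, hanti, U, V, hU, hV, hC⟩ := exists_svd_aux h Cᵀ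
    refine ⟨σ, h0, hanti, V, U, hV, hU, ?_⟩
    have h2 := congrArg Matrix.transpose hC
    rw [Matrix.transpose_transpose, Matrix.transpose_mul, Matrix.transpose_mul,
      Matrix.transpose_transpose, svdDiag_transpose] at h2
    rw [h2, Matrix.mul_assoc]

end SVDexists
/-- The geometric quantum discord equals the CMN-based discord with
`h = 1`, `p = 2`: `D_G^A(ρ) = M_{1,2}(ρ)² − sup_Π M_{1,2}(Π[ρ])²`. -/
theorem geometric_discord_eq_cmn_discord_one_two
    (dA dB : ℕ) (hdA : 0 < dA) (hdB : 0 < dB)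
    (A : Fin (dA ^ 2) → Matrix (Fin dA) (Fin dA) ℂ)
    (B : Fin (dB ^ 2) → Matrix (Fin dB) (Fin dB) ℂ)
    (hA : IsHSOrthonormal A) (hB : IsHSOrthonormal B)
    (ρ : Matrix (Fin dA × Fin dB) (Fin dA × Fin dB) ℂ) (hρ : IsDensityMatrix ρ)
    (σ : Fin (min dA dB ^ 2) → ℝ)
    (hσ : IsSingularValues (corrMat ρ A B) σ) :
    geoDiscord ρ = CMN σ 1 2 ^ (2 : ℝ) - sSup (measuredCMNSet ρ A B 1 2) := by
  classical
  have hρH : ρᴴ = ρ := hρ.1.isHermitian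
  have hr1 : min dA dB ^ 2 ≤ dA ^ 2 := Nat.pow_le_pow_left (min_le_left _ _) 2
  have hr2 : min dA dB ^ 2 ≤ dB ^ 2 := Nat.pow_le_pow_left (min_le_right _ _) 2
  have hrmin : min dA dB ^ 2 = min (dA ^ 2) (dB ^ 2) := by
    rcases le_total dA dB with h | h
    · rw [min_eq_left h, min_eq_left (Nat.pow_le_pow_left h 2)]
    · rw [min_eq_right h, min_eq_right (Nat.pow_le_pow_left h 2)]
  have hfrobρ : CMN σ 1 2 ^ (2 : ℝ) = frobSq ρ := by
    rw [cmn_one_two_sq, isSingularValues_sum_sq hr1 hr2 hσ,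
      ← frobSq_eq_sum_corr hdA hdB A B hA hB ρ hρH]
  set T := measuredCMNSet ρ A B 1 2 with hT
  have hmf : ∀ e : Fin dA → Fin dA → ℂ, IsONFamily e →
      frobSq ρ = frobSq (ρ - measured ρ e) + frobSq (measured ρ e) := by
    intro e he
    have hX : measured (ρ - measured ρ e) e = 0 := by
      rw [measured_sub, measured_idem he, sub_self]
    have hY : measured (measured ρ e) e = measured ρ e := measured_idem he ρ
    have h := frobSq_add_of_ortho hX hY
    rwa [sub_add_cancel] at h
  have hTval : ∀ x ∈ T, ∃ e : Fin dA → Fin dA → ℂ, IsONFamily e ∧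
      x = frobSq (measured ρ e) := by
    rintro x ⟨e, he, σ', hσ', hx⟩
    refine ⟨e, he, ?_⟩
    rw [hx, cmn_one_two_sq, isSingularValues_sum_sq hr1 hr2 hσ',
      ← frobSq_eq_sum_corr hdA hdB A B hA hB _ (measured_herm hρH)]
  have hTmem : ∀ e : Fin dA → Fin dA → ℂ, IsONFamily e → frobSq (measured ρ e) ∈ T := by
    intro e he
    obtain ⟨σ', hσ'⟩ := exists_svd hrmin (corrMat (measured ρ e) A B)
    refine ⟨e, he, σ', hσ', ?_⟩
    rw [cmn_one_two_sq, isSingularValues_sum_sq hr1 hr2 hσ',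
      ← frobSq_eq_sum_corr hdA hdB A B hA hB _ (measured_herm hρH)]
  have hub : ∀ x ∈ T, x ≤ frobSq ρ := by
    intro x hx
    obtain ⟨e, he, hxe⟩ := hTval x hx
    have h2 := hmf e he
    have h3 := frobSq_nonneg' (ρ - measured ρ e)
    rw [hxe]; linarith
  have hTbdd : BddAbove T := ⟨frobSq ρ, hub⟩
  have hTne : T.Nonempty := ⟨_, hTmem _ (std_isON dA)⟩
  have hSIn : ∀ e : Fin dA → Fin dA → ℂ, IsONFamily e →
      ∃ χ, IsCQState χ ∧ frobSq ρ - frobSq (measured ρ e) = frobSq (ρ - χ) := by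
    intro e he
    exact ⟨measured ρ e, measured_isCQ hdB he hρ, by linarith [hmf e he]⟩
  have hSlb : ∀ x ∈ {x : ℝ | ∃ χ, IsCQState χ ∧ x = frobSq (ρ - χ)},
      frobSq ρ - sSup T ≤ x := by
    rintro x ⟨χ, ⟨e, he, q, τ, hq0, hqs, hτ, hχ⟩, hxval⟩
    have hfix : measured χ e = χ := measured_fix_cq he q τ hχ
    have hX : measured (ρ - measured ρ e) e = 0 := by
      rw [measured_sub, measured_idem he, sub_self]
    have hY : measured (measured ρ e - χ) e = measured ρ e - χ := by
      rw [measured_sub, measured_idem he, hfix]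
    have h3 := frobSq_add_of_ortho hX hY
    rw [sub_add_sub_cancel] at h3
    have h4 := hmf e he
    have h5 := frobSq_nonneg' (measured ρ e - χ)
    have h6 : frobSq (measured ρ e) ≤ sSup T := le_csSup hTbdd (hTmem e he)
    rw [hxval]
    linarith
  have hSne : ({x : ℝ | ∃ χ, IsCQState χ ∧ x = frobSq (ρ - χ)}).Nonempty := by
    obtain ⟨χ, hχ, hval⟩ := hSIn _ (std_isON dA)
    exact ⟨_, χ, hχ, rfl⟩
  have hmain : sInf {x : ℝ | ∃ χ, IsCQState χ ∧ x = frobSq (ρ - χ)} = frobSq ρ - sSup T := by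
    refine le_antisymm ?_ (le_csInf hSne hSlb)
    have hBb : BddBelow {x : ℝ | ∃ χ, IsCQState χ ∧ x = frobSq (ρ - χ)} :=
      ⟨frobSq ρ - sSup T, hSlb⟩
    have h7 : sSup T ≤ frobSq ρ -
        sInf {x : ℝ | ∃ χ, IsCQState χ ∧ x = frobSq (ρ - χ)} := by
      refine csSup_le hTne ?_
      intro t ht
      obtain ⟨e, he, hte⟩ := hTval t ht
      obtain ⟨χ, hχ, hval⟩ := hSIn e he
      have h8 : frobSq ρ - t ∈ {x : ℝ | ∃ χ, IsCQState χ ∧ x = frobSq (ρ - χ)} :=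
        ⟨χ, hχ, by rw [hte]; exact hval⟩
      have h9 := csInf_le hBb h8
      linarith
    linarith
  unfold geoDiscord
  rw [hmain, hfrobρ]
end
end

section
/- Let |ψ⟩ = Σ_{k=1}^d s_k |φ_k⟩⊗|ξ_k⟩ be the Schmidt decomposition of a unit vector in ℂ^{d_A}⊗ℂ^{d_B} and set ρ = |ψ⟩⟨ψ|. Then the operator-Schmidt coefficients of ρ (the singular values of its correlation matrix) are exactly the d² pairwise products {s_k s_l : 1 ≤ k,l ≤ d}, counted with multiplicity (so for k ≠ l the value s_k s_l appears twice). -/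
open Matrix Finset
open scoped Kronecker ComplexOrder

noncomputable section

lemma trace_vecMulVec_mul {n : Type*} [Fintype n] (u w : n → ℂ) (M : Matrix n n ℂ) :
    (Matrix.vecMulVec u w * M).trace = w ⬝ᵥ (M *ᵥ u) := by
  simp only [Matrix.trace, Matrix.diag, Matrix.mul_apply, Matrix.vecMulVec_apply,
    dotProduct, Matrix.mulVec, Finset.mul_sum]
  rw [Finset.sum_comm]
  congr 1; ext q; congr 1; ext p; ring

lemma vecMulVec_mulVec' {n : Type*} [Fintype n] (u w x : n → ℂ) :
    (Matrix.vecMulVec u w) *ᵥ x = (w ⬝ᵥ x) • u := by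
  ext q
  simp [Matrix.mulVec, Matrix.vecMulVec_apply, dotProduct, Finset.sum_mul]
  exact Finset.sum_congr rfl fun p _ => by ring

lemma trace_vecMulVec_mul_vecMulVec {n : Type*} [Fintype n] (u w u' w' : n → ℂ) :
    (Matrix.vecMulVec u w * Matrix.vecMulVec u' w').trace = (w ⬝ᵥ u') * (w' ⬝ᵥ u) := by
  rw [trace_vecMulVec_mul, vecMulVec_mulVec', dotProduct_smul]
  simp [mul_comm]

lemma conjTranspose_vecMulVec' {n : Type*} [Fintype n] (u v : n → ℂ) :
    (Matrix.vecMulVec u (star v))ᴴ = Matrix.vecMulVec v (star u) := by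
  ext a a'
  simp [Matrix.vecMulVec_apply, Matrix.conjTranspose_apply, mul_comm]

lemma hs_parseval {n N : ℕ} (hn0 : 0 < n) (hn : N = n ^ 2)
    (A : Fin N → Matrix (Fin n) (Fin n) ℂ) (hA : IsHSOrthonormal A)
    (M P : Matrix (Fin n) (Fin n) ℂ) :
    ∑ i, (starRingEnd ℂ) ((A i * M).trace) * (A i * P).trace = (Mᴴ * P).trace := by
  have coeff : ∀ (c : Fin N → ℂ) (j : Fin N), (A j * ∑ i, c i • A i).trace = c j := by
    intro c j
    rw [Matrix.mul_sum]
    simp only [Matrix.mul_smul, Matrix.trace_sum, Matrix.trace_smul, hA.2, smul_eq_mul,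
      mul_ite, mul_one, mul_zero]
    simp
  have hli : LinearIndependent ℂ A := by
    rw [Fintype.linearIndependent_iff]
    intro c hc j
    have h2 := congrArg (fun X => (A j * X).trace) hc
    simpa [coeff] using h2
  have hcard : Fintype.card (Fin N) = Module.finrank ℂ (Matrix (Fin n) (Fin n) ℂ) := by
    rw [Module.finrank_matrix]
    simp [hn, sq]
  haveI : Nonempty (Fin N) := by
    refine Fin.pos_iff_nonempty.mp ?_
    rw [hn]; positivity
  set b := basisOfLinearIndependentOfCardEqFinrank hli hcard with hbdef
  have hb : ⇑b = A := coe_basisOfLinearIndependentOfCardEqFinrank hli hcard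
  have expand : ∀ X : Matrix (Fin n) (Fin n) ℂ, X = ∑ i, (A i * X).trace • A i := by
    intro X
    have h1 : X = ∑ i, b.repr X i • A i := by
      conv_lhs => rw [← b.sum_repr X]
      simp [hb]
    have h2 : ∀ j, (A j * X).trace = b.repr X j := by
      intro j; conv_lhs => rw [h1]
      exact coeff _ j
    conv_lhs => rw [h1]
    exact Finset.sum_congr rfl fun i _ => by rw [h2]
  have hM := expand M
  have hP := expand P
  rw [hM, hP]
  simp only [coeff]
  rw [Matrix.conjTranspose_sum, Matrix.sum_mul, Matrix.trace_sum]
  refine Finset.sum_congr rfl fun i _ => ?_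
  rw [Matrix.conjTranspose_smul, (hA.1 i).eq, Matrix.smul_mul, Matrix.mul_sum, Matrix.trace_smul]
  simp only [Matrix.mul_smul, Matrix.trace_sum, Matrix.trace_smul, hA.2, smul_eq_mul,
    mul_ite, mul_one, mul_zero]
  simp [Finset.sum_ite_eq]

lemma prod_fin_split {n r : ℕ} (hrn : r ≤ n) (F : ℕ → ℂ) :
    ∏ j : Fin n, F (j : ℕ) = (∏ k : Fin r, F (k : ℕ)) * ∏ i : Fin (n - r), F (r + (i : ℕ)) := by
  obtain ⟨c, rfl⟩ : ∃ c, n = r + c := ⟨n - r, by omega⟩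
  have hc : r + c - r = c := by omega
  rw [hc, Fin.prod_univ_eq_prod_range (fun i => F i) (r + c),
    Fin.prod_univ_eq_prod_range (fun i => F i) r,
    Fin.prod_univ_eq_prod_range (fun i => F (r + i)) c, Finset.prod_range_add]

lemma svdDiag_transpose_mul {m n r : ℕ} (hrm : r ≤ m) (σ : Fin r → ℝ) :
    (svdDiag m n r σ)ᵀ * svdDiag m n r σ =
      Matrix.diagonal (fun j : Fin n => if h : (j : ℕ) < r then σ ⟨(j : ℕ), h⟩ ^ 2 else 0) := by
  ext j j'
  simp only [Matrix.mul_apply, Matrix.transpose_apply, svdDiag, Matrix.diagonal_apply]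
  by_cases hj : (j : ℕ) < r
  · have hjm : (j : ℕ) < m := lt_of_lt_of_le hj hrm
    rw [Finset.sum_eq_single (⟨(j : ℕ), hjm⟩ : Fin m)]
    · rcases eq_or_ne j j' with rfl | hjj
      · rw [dif_pos ⟨rfl, hj⟩, if_pos rfl, dif_pos hj]; ring
      · have h2 : ¬((((⟨(j : ℕ), hjm⟩ : Fin m) : ℕ) = (j' : ℕ)) ∧
            (((⟨(j : ℕ), hjm⟩ : Fin m) : ℕ) < r)) := by
          rintro ⟨h1, -⟩
          exact hjj (Fin.ext (by simpa using h1))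
        rw [if_neg hjj, dif_neg h2, mul_zero]
    · intro i _ hi
      rcases Decidable.em ((i : ℕ) = (j : ℕ) ∧ (i : ℕ) < r) with h | h
      · exact absurd (Fin.ext h.1 : i = ⟨(j : ℕ), hjm⟩) hi
      · rw [dif_neg h, zero_mul]
    · intro h; exact absurd (Finset.mem_univ _) h
  · rw [Finset.sum_eq_zero]
    · rcases eq_or_ne j j' with rfl | hjj
      · rw [if_pos rfl, dif_neg hj]
      · rw [if_neg hjj]
    · intro i _
      rcases Decidable.em ((i : ℕ) = (j : ℕ) ∧ (i : ℕ) < r) with h | h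
      · exact absurd (h.1 ▸ h.2) hj
      · rw [dif_neg h, zero_mul]

/-- For a pure state `ρ = |ψ⟩⟨ψ|` with Schmidt decomposition
`|ψ⟩ = Σ_k s_k |φ_k⟩⊗|ξ_k⟩`, the operator-Schmidt coefficients of `ρ` (the singular
values of its correlation matrix) are exactly the `d²` pairwise products `s_k s_l`,
counted with multiplicity. -/
theorem pure_state_operator_schmidt_coefficients
    (dA dB : ℕ) (hdA : 0 < dA) (hdB : 0 < dB)
    (s : Fin (min dA dB) → ℝ) (hs : ∀ k, 0 ≤ s k) (hnorm : ∑ k, s k ^ 2 = 1)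
    (φ : Fin (min dA dB) → (Fin dA → ℂ)) (ξ : Fin (min dA dB) → (Fin dB → ℂ))
    (hφ : IsONFamily φ) (hξ : IsONFamily ξ)
    (A : Fin (dA ^ 2) → Matrix (Fin dA) (Fin dA) ℂ)
    (B : Fin (dB ^ 2) → Matrix (Fin dB) (Fin dB) ℂ)
    (hA : IsHSOrthonormal A) (hB : IsHSOrthonormal B)
    (ρ : Matrix (Fin dA × Fin dB) (Fin dA × Fin dB) ℂ)
    (hρdef : ρ = Matrix.vecMulVec (pureVec s φ ξ) (star (pureVec s φ ξ)))
    (σ : Fin (min dA dB ^ 2) → ℝ)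
    (hσ : IsSingularValues (corrMat ρ A B) σ) :
    Multiset.map σ Finset.univ.val =
      Multiset.map (fun kl : Fin (min dA dB) × Fin (min dA dB) => s kl.1 * s kl.2)
        Finset.univ.val := by
  have hr1 : min dA dB ≤ dA := min_le_left _ _
  have hr2 : min dA dB ≤ dB := min_le_right _ _
  have hrsqA : (min dA dB) ^ 2 ≤ dA ^ 2 := Nat.pow_le_pow_left hr1 2
  have hrsqB : (min dA dB) ^ 2 ≤ dB ^ 2 := Nat.pow_le_pow_left hr2 2
  set d : Fin (min dA dB) × Fin (min dA dB) → ℝ := fun kl => s kl.1 * s kl.2 with hddef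
  set Mk : Fin (min dA dB) × Fin (min dA dB) → Matrix (Fin dA) (Fin dA) ℂ :=
    fun kl => Matrix.vecMulVec (φ kl.1) (star (φ kl.2)) with hMkdef
  set Nk : Fin (min dA dB) × Fin (min dA dB) → Matrix (Fin dB) (Fin dB) ℂ :=
    fun kl => Matrix.vecMulVec (ξ kl.1) (star (ξ kl.2)) with hNkdef
  set X : Matrix (Fin (dA ^ 2)) (Fin (min dA dB) × Fin (min dA dB)) ℂ :=
    Matrix.of (fun i kl => (A i * Mk kl).trace) with hXdef
  set Y : Matrix (Fin (dB ^ 2)) (Fin (min dA dB) × Fin (min dA dB)) ℂ :=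
    Matrix.of (fun j kl => (B j * Nk kl).trace) with hYdef
  set D : Matrix (Fin (min dA dB) × Fin (min dA dB)) (Fin (min dA dB) × Fin (min dA dB)) ℂ :=
    Matrix.diagonal (fun kl => ((d kl : ℝ) : ℂ)) with hDdef
  -- ρ as a sum of Kronecker products
  have hρ : ρ = ∑ kl : Fin (min dA dB) × Fin (min dA dB), ((d kl : ℝ) : ℂ) • (Mk kl ⊗ₖ Nk kl) := by
    rw [hρdef]
    ext ⟨a, b⟩ ⟨a', b'⟩
    simp only [Matrix.vecMulVec_apply, Pi.star_apply, pureVec, Matrix.sum_apply,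
      Matrix.smul_apply, Matrix.kroneckerMap_apply, smul_eq_mul, hMkdef, hNkdef, hddef,
      star_sum, star_mul', Complex.star_def, Complex.conj_ofReal]
    rw [Finset.sum_mul_sum, Fintype.sum_prod_type]
    refine Finset.sum_congr rfl fun k _ => (Finset.sum_congr rfl fun l _ => ?_)
    push_cast
    ring
  -- the complexified correlation matrix
  set Cc : Matrix (Fin (dA ^ 2)) (Fin (dB ^ 2)) ℂ :=
    (corrMat ρ A B).map Complex.ofReal with hCcdef
  have hT : ∀ i j, (ρ * (A i ⊗ₖ B j)).trace =
      ∑ kl : Fin (min dA dB) × Fin (min dA dB), ((d kl : ℝ) : ℂ) * (X i kl * Y j kl) := by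
    intro i j
    rw [hρ, Matrix.sum_mul, Matrix.trace_sum]
    refine Finset.sum_congr rfl fun kl _ => ?_
    rw [Matrix.smul_mul, Matrix.trace_smul, ← Matrix.mul_kronecker_mul, Matrix.trace_kronecker,
      Matrix.trace_mul_comm (Mk kl) (A i), Matrix.trace_mul_comm (Nk kl) (B j)]
    simp only [smul_eq_mul, hXdef, hYdef, Matrix.of_apply]
  have hXc : ∀ i kl, (starRingEnd ℂ) (X i kl) = X i (kl.2, kl.1) := by
    intro i kl
    have : (starRingEnd ℂ) ((A i * Mk kl).trace) = ((A i * Mk kl)ᴴ).trace := by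
      rw [Matrix.trace_conjTranspose]; rfl
    simp only [hXdef, Matrix.of_apply]; rw [this]
    simp only [hXdef, Matrix.of_apply, this, Matrix.conjTranspose_mul, hMkdef,
      conjTranspose_vecMulVec', (hA.1 i).eq]
    rw [Matrix.trace_mul_comm]
  have hYc : ∀ j kl, (starRingEnd ℂ) (Y j kl) = Y j (kl.2, kl.1) := by
    intro j kl
    have : (starRingEnd ℂ) ((B j * Nk kl).trace) = ((B j * Nk kl)ᴴ).trace := by
      rw [Matrix.trace_conjTranspose]; rfl
    simp only [hYdef, Matrix.of_apply]; rw [this]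
    simp only [hYdef, Matrix.of_apply, this, Matrix.conjTranspose_mul, hNkdef,
      conjTranspose_vecMulVec', (hB.1 j).eq]
    rw [Matrix.trace_mul_comm]
  have hTreal : ∀ i j, (starRingEnd ℂ) ((ρ * (A i ⊗ₖ B j)).trace) = (ρ * (A i ⊗ₖ B j)).trace := by
    intro i j
    rw [hT i j, map_sum]
    rw [← Equiv.sum_comp (Equiv.prodComm (Fin (min dA dB)) (Fin (min dA dB)))
      (fun kl => ((d kl : ℝ) : ℂ) * (X i kl * Y j kl))]
    refine Finset.sum_congr rfl fun kl _ => ?_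
    rw [_root_.map_mul, _root_.map_mul, hXc, hYc, Complex.conj_ofReal]
    simp only [Equiv.prodComm_apply, Prod.swap, hddef]
    push_cast
    ring
  have hC : Cc = X * D * Yᵀ := by
    ext i j
    have hre : ((((ρ * (A i ⊗ₖ B j)).trace).re : ℝ) : ℂ) = (ρ * (A i ⊗ₖ B j)).trace :=
      Complex.conj_eq_iff_re.mp (hTreal i j)
    simp only [hCcdef, Matrix.map_apply, corrMat, hre]
    rw [hT i j, Matrix.mul_apply]
    refine Finset.sum_congr rfl fun kl _ => ?_
    simp only [hDdef, Matrix.mul_diagonal, Matrix.transpose_apply]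
    ring
  have hXX : Xᴴ * X = 1 := by
    ext kl kl'
    rw [Matrix.mul_apply]
    simp only [Matrix.conjTranspose_apply, hXdef, Matrix.of_apply, Complex.star_def]
    rw [hs_parseval hdA rfl A hA (Mk kl) (Mk kl')]
    simp only [hMkdef, conjTranspose_vecMulVec']
    rw [trace_vecMulVec_mul_vecMulVec, hφ kl.1 kl'.1, hφ kl'.2 kl.2]
    simp only [Matrix.one_apply, Prod.ext_iff]
    by_cases h1 : kl.1 = kl'.1 <;> by_cases h2 : kl.2 = kl'.2 <;> simp [h1, h2, eq_comm]
  have hYY : Yᴴ * Y = 1 := by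
    ext kl kl'
    rw [Matrix.mul_apply]
    simp only [Matrix.conjTranspose_apply, hYdef, Matrix.of_apply, Complex.star_def]
    rw [hs_parseval hdB rfl B hB (Nk kl) (Nk kl')]
    simp only [hNkdef, conjTranspose_vecMulVec']
    rw [trace_vecMulVec_mul_vecMulVec, hξ kl.1 kl'.1, hξ kl'.2 kl.2]
    simp only [Matrix.one_apply, Prod.ext_iff]
    by_cases h1 : kl.1 = kl'.1 <;> by_cases h2 : kl.2 = kl'.2 <;> simp [h1, h2, eq_comm]
  set D2 : Matrix (Fin (min dA dB) × Fin (min dA dB)) (Fin (min dA dB) × Fin (min dA dB)) ℂ :=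
    Matrix.diagonal (fun kl => ((d kl : ℝ) : ℂ) ^ 2) with hD2def
  have hXX' : Xᵀ * X.map (starRingEnd ℂ) = 1 := by
    ext kl kl'
    have h := congrFun (congrFun hXX kl) kl'
    rw [Matrix.mul_apply] at h
    simp only [Matrix.conjTranspose_apply, Complex.star_def] at h
    rw [Matrix.mul_apply]
    simp only [Matrix.transpose_apply, Matrix.map_apply]
    have h2 : ∑ i, X i kl * (starRingEnd ℂ) (X i kl') =
        (starRingEnd ℂ) (∑ i, (starRingEnd ℂ) (X i kl) * X i kl') := by
      rw [map_sum]
      refine Finset.sum_congr rfl fun i _ => ?_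
      rw [_root_.map_mul, Complex.conj_conj, mul_comm]
    rw [h2, h]
    simp [Matrix.one_apply, apply_ite]
  have hCc2 : Cc = X.map (starRingEnd ℂ) * D * (Y.map (starRingEnd ℂ))ᵀ := by
    have hconj : Cc.map (starRingEnd ℂ) = Cc := by
      ext i j; simp [hCcdef, Matrix.map_apply, Complex.conj_ofReal]
    calc Cc = Cc.map (starRingEnd ℂ) := hconj.symm
      _ = _ := by
        have hDconj : D.map (starRingEnd ℂ) = D := by
          ext kl kl'
          rcases eq_or_ne kl kl' with rfl | h
          · simp [hDdef, Matrix.map_apply, Complex.conj_ofReal]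
          · simp [hDdef, Matrix.diagonal_apply_ne _ h, Matrix.map_apply, h]
        rw [hC, Matrix.map_mul, Matrix.map_mul, hDconj, Matrix.transpose_map]
  have hCcT : Ccᵀ = Y * D * Xᵀ := by
    rw [hC, Matrix.transpose_mul, Matrix.transpose_mul, Matrix.transpose_transpose,
      Matrix.diagonal_transpose, ← Matrix.mul_assoc]
  have hCtC : Ccᵀ * Cc = Y * D2 * Yᴴ := by
    have hYH : (Y.map (starRingEnd ℂ))ᵀ = Yᴴ := by
      ext a b; simp [Matrix.conjTranspose_apply, Matrix.map_apply, Matrix.transpose_apply]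
    have hD2' : D * D = D2 := by
      simp [hDdef, hD2def, Matrix.diagonal_mul_diagonal, sq]
    have key : ∀ Z : Matrix (Fin (min dA dB) × Fin (min dA dB)) (Fin (dB ^ 2)) ℂ,
        Xᵀ * (X.map (starRingEnd ℂ) * Z) = Z := by
      intro Z; rw [← Matrix.mul_assoc, hXX', Matrix.one_mul]
    rw [hCcT, hCc2, ← hYH, ← hD2']
    simp only [Matrix.mul_assoc]
    rw [key]
  have hdet1 : ∀ t : ℂ, t ≠ 0 →
      (t • (1 : Matrix (Fin (dB ^ 2)) (Fin (dB ^ 2)) ℂ) - Ccᵀ * Cc).det =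
        t ^ (dB ^ 2 - (min dA dB) ^ 2) * ∏ kl : Fin (min dA dB) × Fin (min dA dB), (t - ((d kl : ℝ) : ℂ) ^ 2) := by
    intro t ht
    rw [hCtC]
    have h1 : t • (1 : Matrix (Fin (dB ^ 2)) (Fin (dB ^ 2)) ℂ) - Y * D2 * Yᴴ =
        t • (1 - (t⁻¹ • (Y * D2)) * Yᴴ) := by
      rw [smul_sub, Matrix.smul_mul, smul_smul, mul_inv_cancel₀ ht, one_smul]
    rw [h1, Matrix.det_smul, Matrix.det_one_sub_mul_comm]
    have h2 : Yᴴ * (t⁻¹ • (Y * D2)) = t⁻¹ • D2 := by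
      rw [Matrix.mul_smul, ← Matrix.mul_assoc, hYY, Matrix.one_mul]
    rw [h2]
    have h3 : (1 : Matrix (Fin (min dA dB) × Fin (min dA dB)) (Fin (min dA dB) × Fin (min dA dB)) ℂ)
        - t⁻¹ • D2 = Matrix.diagonal (fun kl => 1 - t⁻¹ * ((d kl : ℝ) : ℂ) ^ 2) := by
      ext kl kl'
      simp only [hD2def, Matrix.sub_apply, Matrix.smul_apply, Matrix.one_apply,
        Matrix.diagonal_apply, smul_eq_mul]
      split <;> simp
    rw [h3, Matrix.det_diagonal]
    have h4 : ∏ kl : Fin (min dA dB) × Fin (min dA dB), (t - ((d kl : ℝ) : ℂ) ^ 2) =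
        t ^ ((min dA dB) ^ 2) * ∏ kl : Fin (min dA dB) × Fin (min dA dB),
          (1 - t⁻¹ * ((d kl : ℝ) : ℂ) ^ 2) := by
      have hcard : (Finset.univ : Finset (Fin (min dA dB) × Fin (min dA dB))).card
          = (min dA dB) ^ 2 := by
        simp [Finset.card_univ, sq]
      rw [← hcard, ← Finset.prod_const, ← Finset.prod_mul_distrib]
      refine Finset.prod_congr rfl fun kl _ => ?_
      rw [mul_sub, mul_one, ← mul_assoc, mul_inv_cancel₀ ht, one_mul]
    rw [h4, ← mul_assoc, ← pow_add]
    congr 2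
    · simp only [Fintype.card_fin]
      omega
  obtain ⟨hσ0, hσanti, U, V, hU, hV, hSVD⟩ := hσ
  have hdet2 : ∀ t : ℂ,
      (t • (1 : Matrix (Fin (dB ^ 2)) (Fin (dB ^ 2)) ℂ) - Ccᵀ * Cc).det =
        t ^ (dB ^ 2 - (min dA dB) ^ 2) * ∏ k : Fin ((min dA dB) ^ 2), (t - ((σ k : ℝ) : ℂ) ^ 2) := by
    have mapmul : ∀ {a b c : ℕ} (P : Matrix (Fin a) (Fin b) ℝ) (Q : Matrix (Fin b) (Fin c) ℝ),
        (P * Q).map Complex.ofReal = P.map Complex.ofReal * Q.map Complex.ofReal := by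
      intro a b c P Q
      ext i j
      simp [Matrix.mul_apply, Matrix.map_apply]
    set G : Matrix (Fin (dB ^ 2)) (Fin (dB ^ 2)) ℝ :=
      Matrix.diagonal (fun j : Fin (dB ^ 2) =>
        if h : (j : ℕ) < (min dA dB) ^ 2 then σ ⟨(j : ℕ), h⟩ ^ 2 else 0) with hGdef
    have hreal : (corrMat ρ A B)ᵀ * corrMat ρ A B = V * G * Vᵀ := by
      have key2 : ∀ Z : Matrix (Fin (dA ^ 2)) (Fin (dB ^ 2)) ℝ, Uᵀ * (U * Z) = Z := by
        intro Z; rw [← Matrix.mul_assoc, hU, Matrix.one_mul]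
      rw [hSVD, hGdef, ← svdDiag_transpose_mul hrsqA σ]
      rw [Matrix.transpose_mul, Matrix.transpose_mul, Matrix.transpose_transpose]
      simp only [Matrix.mul_assoc]
      rw [key2]
    set Vc : Matrix (Fin (dB ^ 2)) (Fin (dB ^ 2)) ℂ := V.map Complex.ofReal with hVcdef
    have hCtC2 : Ccᵀ * Cc = Vc * G.map Complex.ofReal * Vcᵀ := by
      rw [hCcdef, ← Matrix.transpose_map, ← mapmul, hreal, mapmul, mapmul, Matrix.transpose_map]
    have hVc1 : Vcᵀ * Vc = 1 := by
      rw [hVcdef, ← Matrix.transpose_map, ← mapmul, hV]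
      ext i j
      simp [Matrix.map_apply, Matrix.one_apply, apply_ite]
    have hVc2 : Vc * Vcᵀ = 1 := mul_eq_one_comm.mp hVc1
    intro t
    have h5 : t • (1 : Matrix (Fin (dB ^ 2)) (Fin (dB ^ 2)) ℂ) - Ccᵀ * Cc =
        Vc * (t • 1 - G.map Complex.ofReal) * Vcᵀ := by
      rw [hCtC2, Matrix.mul_sub, Matrix.sub_mul, Matrix.mul_smul, Matrix.mul_one,
        Matrix.smul_mul, hVc2]
    rw [h5, Matrix.det_mul, Matrix.det_mul]
    have hdV : Vc.det * Vcᵀ.det = 1 := by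
      have := congrArg Matrix.det hVc1
      rwa [Matrix.det_mul, Matrix.det_one, mul_comm] at this
    rw [mul_comm (Vc.det), mul_assoc, hdV, mul_one]
    have h6 : t • (1 : Matrix (Fin (dB ^ 2)) (Fin (dB ^ 2)) ℂ) - G.map Complex.ofReal =
        Matrix.diagonal (fun j : Fin (dB ^ 2) =>
          if h : (j : ℕ) < (min dA dB) ^ 2 then t - ((σ ⟨(j : ℕ), h⟩ : ℝ) : ℂ) ^ 2 else t) := by
      ext j j'
      simp only [hGdef, Matrix.sub_apply, Matrix.smul_apply, Matrix.one_apply,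
        Matrix.map_apply, Matrix.diagonal_apply, smul_eq_mul]
      rcases eq_or_ne j j' with rfl | hjj
      · simp only [if_pos rfl]
        by_cases hj : (j : ℕ) < (min dA dB) ^ 2
        · rw [dif_pos hj, dif_pos hj]; push_cast; ring
        · rw [dif_neg hj, dif_neg hj]; push_cast; ring
      · simp [hjj]
    rw [h6, Matrix.det_diagonal]
    have h7 : ∏ j : Fin (dB ^ 2), (if h : (j : ℕ) < (min dA dB) ^ 2 then
          t - ((σ ⟨(j : ℕ), h⟩ : ℝ) : ℂ) ^ 2 else t) =
        (∏ k : Fin ((min dA dB) ^ 2), (t - ((σ k : ℝ) : ℂ) ^ 2)) *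
          ∏ i : Fin (dB ^ 2 - (min dA dB) ^ 2), t := by
      rw [prod_fin_split hrsqB (fun idx => if h : idx < (min dA dB) ^ 2 then
        t - ((σ ⟨idx, h⟩ : ℝ) : ℂ) ^ 2 else t)]
      congr 1
      · refine Finset.prod_congr rfl fun k _ => ?_
        rw [dif_pos k.isLt]
      · refine Finset.prod_congr rfl fun i _ => ?_
        rw [dif_neg (by omega)]
    rw [h7, Finset.prod_const, Finset.card_univ, Fintype.card_fin, mul_comm]
  have hpoly : (∏ k : Fin ((min dA dB) ^ 2), (Polynomial.X - Polynomial.C (((σ k : ℝ) : ℂ) ^ 2))) =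
      ∏ kl : Fin (min dA dB) × Fin (min dA dB), (Polynomial.X - Polynomial.C (((d kl : ℝ) : ℂ) ^ 2)) := by
    refine Polynomial.eq_of_infinite_eval_eq _ _ ?_
    have hinf : ({0}ᶜ : Set ℂ).Infinite := Set.Finite.infinite_compl (Set.finite_singleton 0)
    refine hinf.mono fun t ht => ?_
    have ht0 : t ≠ 0 := ht
    have e1 := hdet1 t ht0
    have e2 := hdet2 t
    have e3 : t ^ (dB ^ 2 - (min dA dB) ^ 2) *
          ∏ k : Fin ((min dA dB) ^ 2), (t - ((σ k : ℝ) : ℂ) ^ 2) =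
        t ^ (dB ^ 2 - (min dA dB) ^ 2) *
          ∏ kl : Fin (min dA dB) × Fin (min dA dB), (t - ((d kl : ℝ) : ℂ) ^ 2) :=
      e2.symm.trans e1
    have e4 := mul_left_cancel₀ (pow_ne_zero (dB ^ 2 - (min dA dB) ^ 2) ht0) e3
    simp only [Set.mem_setOf_eq, Polynomial.eval_prod, Polynomial.eval_sub,
      Polynomial.eval_X, Polynomial.eval_C]
    exact e4
  have hmul : Multiset.map (fun k => ((σ k : ℝ) : ℂ) ^ 2) Finset.univ.val =
      Multiset.map (fun kl => ((d kl : ℝ) : ℂ) ^ 2) Finset.univ.val := by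
    have e1 : (∏ k : Fin ((min dA dB) ^ 2), (Polynomial.X - Polynomial.C (((σ k : ℝ) : ℂ) ^ 2))) =
        ((Finset.univ.val.map (fun k => ((σ k : ℝ) : ℂ) ^ 2)).map
          (fun a => Polynomial.X - Polynomial.C a)).prod := by
      rw [Multiset.map_map, Finset.prod_eq_multiset_prod]
      rfl
    have e2 : (∏ kl : Fin (min dA dB) × Fin (min dA dB),
          (Polynomial.X - Polynomial.C (((d kl : ℝ) : ℂ) ^ 2))) =
        ((Finset.univ.val.map (fun kl => ((d kl : ℝ) : ℂ) ^ 2)).map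
          (fun a => Polynomial.X - Polynomial.C a)).prod := by
      rw [Multiset.map_map, Finset.prod_eq_multiset_prod]
      rfl
    have := congrArg Polynomial.roots hpoly
    rwa [e1, e2, Polynomial.roots_multiset_prod_X_sub_C,
      Polynomial.roots_multiset_prod_X_sub_C] at this
  -- unsquare
  have h1 := congrArg (Multiset.map (fun z : ℂ => Real.sqrt z.re)) hmul
  rw [Multiset.map_map, Multiset.map_map] at h1
  calc Multiset.map σ Finset.univ.val
      = Multiset.map ((fun z : ℂ => Real.sqrt z.re) ∘ fun k => ((σ k : ℝ) : ℂ) ^ 2)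
          Finset.univ.val := by
        refine (Multiset.map_congr rfl fun k _ => ?_).symm
        simp only [Function.comp_apply, ← Complex.ofReal_pow, Complex.ofReal_re]
        exact Real.sqrt_sq (hσ0 k)
    _ = Multiset.map ((fun z : ℂ => Real.sqrt z.re) ∘ fun kl => ((d kl : ℝ) : ℂ) ^ 2)
          Finset.univ.val := h1
    _ = Multiset.map (fun kl : Fin (min dA dB) × Fin (min dA dB) => s kl.1 * s kl.2) Finset.univ.val := by
        refine Multiset.map_congr rfl fun kl _ => ?_
        simp only [Function.comp_apply, ← Complex.ofReal_pow, Complex.ofReal_re]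
        exact Real.sqrt_sq (mul_nonneg (hs kl.1) (hs kl.2))

end
end

section
/- Let ρ = |ψ⟩⟨ψ| be a pure state on ℂ^{d_A}⊗ℂ^{d_B} and let t ∈ {1,…,d}, d = min{d_A,d_B}. Then for every p ∈ [1,∞), the Correlation Minor Norm M_{h=t², p}(ρ) is nonzero if and only if the Schmidt rank of |ψ⟩ (the number of nonzero Schmidt coefficients s_k) is at least t. -/
open Matrix Finset
open scoped Kronecker ComplexOrder

noncomputable section

/-! ### Auxiliary development -/

section Aux

open scoped RealInnerProductSpace

/-- `CMN` is nonzero iff there are at least `h` nonzero singular values. -/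
lemma cmn_ne_zero_iff {r : ℕ} (σ : Fin r → ℝ) (h : ℕ) (p : ℝ) (hp : 1 ≤ p)
    (hσ : ∀ k, 0 ≤ σ k) :
    CMN σ h p ≠ 0 ↔ h ≤ (Finset.univ.filter fun k => σ k ≠ 0).card := by
  have hp0 : p ≠ 0 := by positivity
  have hterm : ∀ R ∈ Finset.univ.powersetCard h, (0:ℝ) ≤ ∏ k ∈ R, σ k ^ p := by
    intro R _; exact Finset.prod_nonneg fun k _ => Real.rpow_nonneg (hσ k) p
  have hS0 : (0:ℝ) ≤ ∑ R ∈ Finset.univ.powersetCard h, ∏ k ∈ R, σ k ^ p :=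
    Finset.sum_nonneg hterm
  rw [CMN, Ne, Real.rpow_eq_zero hS0 (one_div_ne_zero hp0)]
  rw [Finset.sum_eq_zero_iff_of_nonneg hterm]
  push_neg
  constructor
  · rintro ⟨R, hR, hRne⟩
    rw [Finset.mem_powersetCard_univ] at hR
    rw [← hR]
    apply Finset.card_le_card
    intro k hk
    rw [Finset.mem_filter]
    refine ⟨Finset.mem_univ _, ?_⟩
    intro h0
    exact hRne (Finset.prod_eq_zero hk (by rw [h0, Real.zero_rpow hp0]))
  · intro hle
    obtain ⟨R, hRsub, hRcard⟩ := Finset.exists_subset_card_eq hle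
    refine ⟨R, Finset.mem_powersetCard_univ.2 hRcard, ?_⟩
    apply Finset.prod_ne_zero_iff.2
    intro k hk
    have := (Finset.mem_filter.1 (hRsub hk)).2
    rw [Ne, Real.rpow_eq_zero (hσ k) hp0]
    exact this

/-- Rank is preserved by sandwiching with matrices whose Gram matrices are invertible. -/
lemma rank_sandwich' {ι ι' κ κ' : Type*} [Fintype ι] [Fintype ι'] [Fintype κ] [Fintype κ']
    [DecidableEq κ] [DecidableEq κ']
    (P : Matrix ι κ ℝ) (Q : Matrix ι' κ' ℝ) (M : Matrix κ κ' ℝ)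
    (W1 : Matrix κ κ ℝ) (W2 : Matrix κ' κ' ℝ)
    (h1 : W1 * (Pᵀ * P) = 1) (h2 : (Qᵀ * Q) * W2 = 1) :
    (P * M * Qᵀ).rank = M.rank := by
  apply le_antisymm
  · exact le_trans (Matrix.rank_mul_le_left _ _) (Matrix.rank_mul_le_right _ _)
  · have hM : M = (W1 * Pᵀ) * (P * M * Qᵀ) * (Q * W2) := by
      calc M = (W1 * (Pᵀ * P)) * M * ((Qᵀ * Q) * W2) := by
              rw [h1, h2, Matrix.one_mul, Matrix.mul_one]
      _ = (W1 * Pᵀ) * (P * M * Qᵀ) * (Q * W2) := by simp only [Matrix.mul_assoc]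
    calc M.rank = ((W1 * Pᵀ) * (P * M * Qᵀ) * (Q * W2)).rank := by rw [← hM]
    _ ≤ _ := le_trans (Matrix.rank_mul_le_left _ _) (Matrix.rank_mul_le_right _ _)

lemma rank_diagonal' {κ : Type*} [Fintype κ] [DecidableEq κ] (f : κ → ℝ) :
    (Matrix.diagonal f).rank = (Finset.univ.filter fun u => f u ≠ 0).card := by
  classical
  rw [Matrix.rank_diagonal, Fintype.card_subtype]

lemma rank_svdDiag (m n r : ℕ) (hm : r ≤ m) (hn : r ≤ n) (σ : Fin r → ℝ) :
    (svdDiag m n r σ).rank = (Finset.univ.filter fun k => σ k ≠ 0).card := by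
  classical
  set P : Matrix (Fin m) (Fin r) ℝ := fun i k => if i = Fin.castLE hm k then 1 else 0 with hPdef
  set Q : Matrix (Fin n) (Fin r) ℝ := fun j k => if j = Fin.castLE hn k then 1 else 0 with hQdef
  have hP : Pᵀ * P = 1 := by
    ext k k'
    simp only [Matrix.mul_apply, Matrix.transpose_apply, Matrix.one_apply]
    simp only [hPdef]
    rw [Finset.sum_eq_single (Fin.castLE hm k)]
    · simp [Fin.castLE_inj, eq_comm]
    · intro i _ hi; simp [hi]
    · simp
  have hQ : Qᵀ * Q = 1 := by
    ext k k'
    simp only [Matrix.mul_apply, Matrix.transpose_apply, Matrix.one_apply]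
    simp only [hQdef]
    rw [Finset.sum_eq_single (Fin.castLE hn k)]
    · simp [Fin.castLE_inj, eq_comm]
    · intro i _ hi; simp [hi]
    · simp
  have hfact : svdDiag m n r σ = P * Matrix.diagonal σ * Qᵀ := by
    ext i j
    simp only [Matrix.mul_apply, Matrix.transpose_apply]
    simp only [hPdef, hQdef]
    have key : ∀ x : Fin r, (∑ k : Fin r, (if i = Fin.castLE hm k then (1:ℝ) else 0) * Matrix.diagonal σ k x) * (if j = Fin.castLE hn x then (1:ℝ) else 0) = (if i = Fin.castLE hm x ∧ j = Fin.castLE hn x then σ x else 0) := by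
      intro x
      rw [Finset.sum_eq_single x (by intro k _ hk; simp [Matrix.diagonal_apply, hk]) (by simp)]
      simp only [Matrix.diagonal_apply_eq]
      split_ifs <;> simp_all
    rw [Finset.sum_congr rfl (fun x _ => key x)]
    unfold svdDiag
    by_cases hij : (i:ℕ) = (j:ℕ) ∧ (i:ℕ) < r
    · rw [dif_pos hij, Finset.sum_eq_single (⟨(i:ℕ), hij.2⟩ : Fin r)]
      · rw [if_pos]
        exact ⟨by apply Fin.ext; simp, by apply Fin.ext; simp [← hij.1]⟩
      · intro x _ hx
        rw [if_neg]
        rintro ⟨h1, h2⟩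
        exact hx (by apply Fin.ext; simpa using congrArg Fin.val h1.symm)
      · simp
    · rw [dif_neg hij, eq_comm]
      apply Finset.sum_eq_zero
      intro x _
      rw [if_neg]
      rintro ⟨h1, h2⟩
      have e1 := congrArg Fin.val h1
      have e2 := congrArg Fin.val h2
      simp at e1 e2
      exact hij ⟨by rw [e1, e2], by rw [e1]; exact x.2⟩
  rw [hfact, rank_sandwich' P Q _ 1 1 (by rw [hP, Matrix.mul_one]) (by rw [hQ, Matrix.mul_one]),
    rank_diagonal']

/-! #### Dimension of the Hermitian matrices and Parseval -/

abbrev HermSub (n : ℕ) : Submodule ℝ (Matrix (Fin n) (Fin n) ℂ) :=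
  selfAdjoint.submodule ℝ (Matrix (Fin n) (Fin n) ℂ)

def skewEquivSelf (n : ℕ) :
    skewAdjoint (Matrix (Fin n) (Fin n) ℂ) ≃ₗ[ℝ] selfAdjoint (Matrix (Fin n) (Fin n) ℂ) where
  toFun x := ⟨Complex.I • (x : Matrix (Fin n) (Fin n) ℂ), by
    have hx : star (x : Matrix (Fin n) (Fin n) ℂ) = -(x : Matrix (Fin n) (Fin n) ℂ) :=
      x.2
    simp [selfAdjoint.mem_iff, star_smul, hx, Complex.conj_I, neg_smul]⟩
  invFun y := ⟨(-Complex.I) • (y : Matrix (Fin n) (Fin n) ℂ), by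
    have hy : star (y : Matrix (Fin n) (Fin n) ℂ) = (y : Matrix (Fin n) (Fin n) ℂ) := y.2
    simp [skewAdjoint.mem_iff, star_smul, hy, Complex.conj_I, neg_smul]⟩
  left_inv x := by
    ext1
    simp [smul_smul]
  right_inv y := by
    ext1
    simp [smul_smul]
  map_add' x y := by ext1; simp
  map_smul' r x := by
    ext1
    show Complex.I • ((r • x : skewAdjoint (Matrix (Fin n) (Fin n) ℂ)) : Matrix (Fin n) (Fin n) ℂ)
      = r • (Complex.I • (x : Matrix (Fin n) (Fin n) ℂ))
    rw [skewAdjoint.val_smul, smul_comm]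

lemma finrank_herm (n : ℕ) : Module.finrank ℝ (HermSub n) = n ^ 2 := by
  haveI : Module.Finite ℝ (selfAdjoint (Matrix (Fin n) (Fin n) ℂ)) :=
    Module.Finite.of_surjective (selfAdjointPart ℝ)
      (fun y => ⟨(y : Matrix (Fin n) (Fin n) ℂ), y.2.selfAdjointPart_apply ℝ⟩)
  haveI : Module.Finite ℝ (skewAdjoint (Matrix (Fin n) (Fin n) ℂ)) :=
    Module.Finite.of_surjective (skewAdjointPart ℝ)
      (fun y => ⟨(y : Matrix (Fin n) (Fin n) ℂ),
        LinearMap.ext_iff.1 (skewAdjointPart_comp_subtype_skewAdjoint ℝ) y⟩)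
  have e1 := StarModule.decomposeProdAdjoint ℝ (Matrix (Fin n) (Fin n) ℂ)
  have h1 : Module.finrank ℝ (Matrix (Fin n) (Fin n) ℂ) =
      Module.finrank ℝ (selfAdjoint (Matrix (Fin n) (Fin n) ℂ) ×
        skewAdjoint (Matrix (Fin n) (Fin n) ℂ)) := e1.finrank_eq
  have h2 : Module.finrank ℝ (Matrix (Fin n) (Fin n) ℂ) = n * n * 2 := by
    rw [Module.finrank_matrix, Complex.finrank_real_complex, Fintype.card_fin]
  have h3 : Module.finrank ℝ (skewAdjoint (Matrix (Fin n) (Fin n) ℂ)) =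
      Module.finrank ℝ (selfAdjoint (Matrix (Fin n) (Fin n) ℂ)) :=
    (skewEquivSelf n).finrank_eq
  have h4 : Module.finrank ℝ (selfAdjoint (Matrix (Fin n) (Fin n) ℂ) ×
      skewAdjoint (Matrix (Fin n) (Fin n) ℂ)) =
      Module.finrank ℝ (selfAdjoint (Matrix (Fin n) (Fin n) ℂ)) +
      Module.finrank ℝ (skewAdjoint (Matrix (Fin n) (Fin n) ℂ)) :=
    Module.finrank_prod
  have h5 : Module.finrank ℝ (selfAdjoint (Matrix (Fin n) (Fin n) ℂ)) = n * n := by omega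
  show Module.finrank ℝ (selfAdjoint (Matrix (Fin n) (Fin n) ℂ)) = n ^ 2
  rw [h5, sq]

abbrev EmbSp (n : ℕ) := EuclideanSpace ℝ ((Fin n × Fin n) ⊕ (Fin n × Fin n))

def matEmb (n : ℕ) : Matrix (Fin n) (Fin n) ℂ →ₗ[ℝ] EmbSp n where
  toFun X := WithLp.toLp 2 (fun z => Sum.elim (fun ab : Fin n × Fin n => (X ab.1 ab.2).re)
    (fun ab : Fin n × Fin n => (X ab.1 ab.2).im) z)
  map_add' X Y := by
    ext z
    cases z <;> simp [Matrix.add_apply]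
  map_smul' r X := by
    ext z
    cases z <;> simp [Matrix.smul_apply, Complex.smul_re, Complex.smul_im]

lemma matEmb_injective (n : ℕ) : Function.Injective (matEmb n) := by
  intro X Y h
  ext i j
  apply Complex.ext
  · exact congrArg (fun w => w (Sum.inl (i, j))) h
  · exact congrArg (fun w => w (Sum.inr (i, j))) h

lemma matEmb_inner {n : ℕ} (X Y : Matrix (Fin n) (Fin n) ℂ) (hY : Y.IsHermitian) :
    ⟪matEmb n X, matEmb n Y⟫ = (X * Y).trace.re := by
  rw [PiLp.inner_apply]
  simp only [RCLike.inner_apply, conj_trivial]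
  rw [Fintype.sum_sum_type]
  have : (X * Y).trace = ∑ a : Fin n, ∑ b : Fin n, X a b * Y b a := by
    simp [Matrix.trace, Matrix.diag, Matrix.mul_apply]
  rw [this, Complex.re_sum]
  simp only [Complex.re_sum]
  rw [← Fintype.sum_prod_type', ← Finset.sum_add_distrib]
  apply Finset.sum_congr rfl
  intro x _
  have hYx : Y x.2 x.1 = star (Y x.1 x.2) := by
    conv_lhs => rw [← hY]
    rfl
  rw [hYx]
  simp [matEmb, Complex.mul_re]
  ring

lemma hs_parseval_s10 {n : ℕ} (A : Fin (n ^ 2) → Matrix (Fin n) (Fin n) ℂ)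
    (hA : IsHSOrthonormal A) (X Y : Matrix (Fin n) (Fin n) ℂ)
    (hX : X.IsHermitian) (hY : Y.IsHermitian) :
    ∑ i, (A i * X).trace.re * (A i * Y).trace.re = (X * Y).trace.re := by
  classical
  set A' : Fin (n ^ 2) → EmbSp n := fun i => matEmb n (A i) with hA'def
  have memHerm : ∀ Z : Matrix (Fin n) (Fin n) ℂ, Z.IsHermitian → Z ∈ HermSub n := by
    intro Z hZ
    show Z ∈ selfAdjoint (Matrix (Fin n) (Fin n) ℂ)
    rw [selfAdjoint.mem_iff, Matrix.star_eq_conjTranspose]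
    exact hZ
  have honA' : Orthonormal ℝ A' := by
    rw [orthonormal_iff_ite]
    intro i j
    rw [hA'def]
    rw [matEmb_inner (A i) (A j) (hA.1 j), hA.2 i j]
    split_ifs <;> simp
  set V : Submodule ℝ (EmbSp n) := (HermSub n).map (matEmb n) with hVdef
  have hVrank : Module.finrank ℝ V = n ^ 2 := by
    rw [hVdef, ← (Submodule.equivMapOfInjective (matEmb n) (matEmb_injective n)
      (HermSub n)).finrank_eq, finrank_herm]
  have hmemA : ∀ i, A' i ∈ V := fun i =>
    Submodule.mem_map_of_mem (memHerm (A i) (hA.1 i))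
  have spanle : Submodule.span ℝ (Set.range A') ≤ V :=
    Submodule.span_le.2 (Set.range_subset_iff.2 hmemA)
  have hli := honA'.linearIndependent
  have hspan : Module.finrank ℝ (Submodule.span ℝ (Set.range A')) = n ^ 2 := by
    rw [finrank_span_eq_card hli, Fintype.card_fin]
  have heq : Submodule.span ℝ (Set.range A') = V :=
    Submodule.eq_of_le_of_finrank_le spanle (by rw [hVrank, hspan])
  set v : Fin (n ^ 2) → V := fun i => ⟨A' i, hmemA i⟩ with hvdef
  have honv : Orthonormal ℝ v := by
    rw [orthonormal_iff_ite]
    intro i j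
    rw [orthonormal_iff_ite] at honA'
    exact honA' i j
  have hmap : Submodule.map V.subtype (Submodule.span ℝ (Set.range v)) =
      Submodule.map V.subtype ⊤ := by
    rw [Submodule.map_span, Submodule.map_top, Submodule.range_subtype, ← Set.range_comp]
    have : V.subtype ∘ v = A' := rfl
    rw [this, heq]
  have hspv : ⊤ ≤ Submodule.span ℝ (Set.range v) :=
    (Submodule.map_injective_of_injective V.injective_subtype hmap).ge
  set b := OrthonormalBasis.mk honv hspv with hbdef
  have hxmem : matEmb n X ∈ V := Submodule.mem_map_of_mem (memHerm X hX)
  have hymem : matEmb n Y ∈ V := Submodule.mem_map_of_mem (memHerm Y hY)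
  have key := b.sum_inner_mul_inner (⟨matEmb n X, hxmem⟩ : V) (⟨matEmb n Y, hymem⟩ : V)
  have hb : ∀ i, b i = v i := fun i => by rw [hbdef, OrthonormalBasis.coe_mk]
  simp only [hb] at key
  have h1 : ∀ i, ⟪(⟨matEmb n X, hxmem⟩ : V), v i⟫ = (A i * X).trace.re := by
    intro i
    rw [hvdef]
    show ⟪matEmb n X, A' i⟫ = _
    rw [real_inner_comm, hA'def, matEmb_inner (A i) X hX]
  have h2 : ∀ i, ⟪v i, (⟨matEmb n Y, hymem⟩ : V)⟫ = (A i * Y).trace.re := by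
    intro i
    rw [hvdef]
    show ⟪A' i, matEmb n Y⟫ = _
    rw [hA'def, matEmb_inner (A i) Y hY]
  have h3 : ⟪(⟨matEmb n X, hxmem⟩ : V), (⟨matEmb n Y, hymem⟩ : V)⟫ = (X * Y).trace.re := by
    show ⟪matEmb n X, matEmb n Y⟫ = _
    exact matEmb_inner X Y hY
  rw [← h3, ← key]
  exact Finset.sum_congr rfl fun i _ => by rw [h1 i, h2 i]

/-! #### The Hermitian operator Schmidt family of a pure state -/

def FF {n d : ℕ} (v : Fin d → (Fin n → ℂ)) (k l : Fin d) : Matrix (Fin n) (Fin n) ℂ :=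
  Matrix.vecMulVec (v k) (star (v l))

lemma FF_conjTranspose {n d : ℕ} (v : Fin d → (Fin n → ℂ)) (k l : Fin d) :
    (FF v k l)ᴴ = FF v l k := by
  ext i j
  simp [FF, Matrix.vecMulVec_apply, Matrix.conjTranspose_apply, mul_comm]

lemma trace_FF_mul_FF {n d : ℕ} (v : Fin d → (Fin n → ℂ)) (hv : IsONFamily v)
    (k l k' l' : Fin d) :
    (FF v k l * FF v k' l').trace =
      (if l = k' then (1:ℂ) else 0) * (if l' = k then (1:ℂ) else 0) := by
  have h1 := hv l k'
  have h2 := hv l' k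
  simp only [dotProduct, Pi.star_apply] at h1 h2
  rw [← h1, ← h2]
  simp only [Matrix.trace, Matrix.diag, Matrix.mul_apply, FF, Matrix.vecMulVec_apply,
    Pi.star_apply]
  rw [Finset.sum_mul_sum]
  rw [Finset.sum_comm]
  apply Finset.sum_congr rfl
  intro m _
  apply Finset.sum_congr rfl
  intro i _
  ring

def hermFam {n d : ℕ} (v : Fin d → (Fin n → ℂ)) (u : Fin d × Fin d) :
    Matrix (Fin n) (Fin n) ℂ :=
  if u.1 = u.2 then FF v u.1 u.1
  else if u.1 < u.2 then FF v u.1 u.2 + FF v u.2 u.1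
  else Complex.I • FF v u.1 u.2 - Complex.I • FF v u.2 u.1

lemma hermFam_isHermitian {n d : ℕ} (v : Fin d → (Fin n → ℂ)) (u : Fin d × Fin d) :
    (hermFam v u).IsHermitian := by
  obtain ⟨k, l⟩ := u
  unfold Matrix.IsHermitian
  unfold hermFam
  split_ifs
  · simp [FF_conjTranspose]
  · simp only [conjTranspose_add, FF_conjTranspose]
    exact add_comm _ _
  · simp only [conjTranspose_sub, conjTranspose_smul, Complex.star_def, Complex.conj_I,
      FF_conjTranspose, neg_smul, sub_neg_eq_add, neg_add_eq_sub]

def wH {d : ℕ} (u : Fin d × Fin d) : ℝ := if u.1 = u.2 then 1 else 2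

set_option maxHeartbeats 3000000 in
lemma trace_hermFam_mul {n d : ℕ} (v : Fin d → (Fin n → ℂ)) (hv : IsONFamily v)
    (u u' : Fin d × Fin d) :
    (hermFam v u * hermFam v u').trace = if u = u' then (wH u : ℂ) else 0 := by
  obtain ⟨k, l⟩ := u
  obtain ⟨k', l'⟩ := u'
  simp only [Prod.mk.injEq, wH]
  rcases lt_trichotomy k l with hkl | hkl | hkl <;>
    rcases lt_trichotomy k' l' with hkl' | hkl' | hkl' <;>
  · unfold hermFam
    simp only [ne_of_lt, ne_of_gt, hkl, hkl', if_pos, if_neg, not_lt_of_gt, lt_irrefl,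
      ite_true, ite_false, ne_eq, lt_self_iff_false]
    simp only [mul_add, add_mul, mul_sub, sub_mul, smul_mul_assoc, mul_smul_comm,
      Matrix.trace_add, Matrix.trace_sub, Matrix.trace_smul, trace_FF_mul_FF v hv,
      smul_eq_mul]
    split_ifs <;> first | (exfalso; fin_omega) | norm_num

/-! #### Decomposition of the pure state -/

def epsHalf {d : ℕ} (u : Fin d × Fin d) : ℝ :=
  if u.1 = u.2 then 1 else if u.1 < u.2 then 1/2 else -(1/2)

lemma rho_eq_sum_FF {dA dB d : ℕ} (s : Fin d → ℝ) (φ : Fin d → (Fin dA → ℂ))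
    (ξ : Fin d → (Fin dB → ℂ)) :
    Matrix.vecMulVec (pureVec s φ ξ) (star (pureVec s φ ξ)) =
      ∑ u : Fin d × Fin d, ((s u.1 * s u.2 : ℝ) : ℂ) • (FF φ u.1 u.2 ⊗ₖ FF ξ u.1 u.2) := by
  ext ⟨a, b⟩ ⟨a', b'⟩
  simp only [Matrix.vecMulVec_apply, pureVec, Pi.star_apply, Matrix.sum_apply,
    Matrix.smul_apply, Matrix.kroneckerMap_apply, FF, Matrix.vecMulVec_apply, smul_eq_mul]
  rw [star_sum, Finset.sum_mul_sum, Fintype.sum_prod_type]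
  apply Finset.sum_congr rfl
  intro k _
  apply Finset.sum_congr rfl
  intro l _
  simp only [star_mul', star_trivial, Complex.star_def, Complex.conj_ofReal, _root_.map_mul]
  push_cast
  ring

lemma pair_identity {a b : ℕ} (F1 F2 : Matrix (Fin a) (Fin a) ℂ)
    (G1 G2 : Matrix (Fin b) (Fin b) ℂ) :
    (F1 + F2) ⊗ₖ (G1 + G2) -
      (Complex.I • F2 - Complex.I • F1) ⊗ₖ (Complex.I • G2 - Complex.I • G1) =
      (2:ℂ) • (F1 ⊗ₖ G1) + (2:ℂ) • (F2 ⊗ₖ G2) := by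
  have hsub : ∀ (X Y : Matrix (Fin a) (Fin a) ℂ) (Z : Matrix (Fin b) (Fin b) ℂ),
      (X - Y) ⊗ₖ Z = X ⊗ₖ Z - Y ⊗ₖ Z := by
    intro X Y Z; ext ⟨i,j⟩ ⟨i',j'⟩
    simp [Matrix.kroneckerMap_apply, Matrix.sub_apply, sub_mul]
  have hsub' : ∀ (X : Matrix (Fin a) (Fin a) ℂ) (Y Z : Matrix (Fin b) (Fin b) ℂ),
      X ⊗ₖ (Y - Z) = X ⊗ₖ Y - X ⊗ₖ Z := by
    intro X Y Z; ext ⟨i,j⟩ ⟨i',j'⟩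
    simp [Matrix.kroneckerMap_apply, Matrix.sub_apply, mul_sub]
  simp only [Matrix.add_kronecker, Matrix.kronecker_add, hsub, hsub',
    Matrix.smul_kronecker, Matrix.kronecker_smul, smul_smul, Complex.I_mul_I]
  module

lemma rho_eq_sum_herm {dA dB d : ℕ} (s : Fin d → ℝ) (φ : Fin d → (Fin dA → ℂ))
    (ξ : Fin d → (Fin dB → ℂ)) :
    Matrix.vecMulVec (pureVec s φ ξ) (star (pureVec s φ ξ)) =
      ∑ u : Fin d × Fin d, ((epsHalf u * s u.1 * s u.2 : ℝ) : ℂ) •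
        (hermFam φ u ⊗ₖ hermFam ξ u) := by
  classical
  rw [rho_eq_sum_FF]
  set S1 := Finset.univ.filter (fun u : Fin d × Fin d => u.1 = u.2) with hS1
  set S2 := Finset.univ.filter (fun u : Fin d × Fin d => u.1 < u.2) with hS2
  set S3 := Finset.univ.filter (fun u : Fin d × Fin d => u.2 < u.1) with hS3
  have h0 : ∀ F : Fin d × Fin d → Matrix (Fin dA × Fin dB) (Fin dA × Fin dB) ℂ,
      ∑ u, F u = ∑ u ∈ S1, F u + (∑ u ∈ S2, F u + ∑ u ∈ S3, F u) := by
    intro F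
    rw [← Finset.sum_filter_add_sum_filter_not Finset.univ
      (fun u : Fin d × Fin d => u.1 = u.2) F]
    congr 1
    rw [← Finset.sum_filter_add_sum_filter_not
      (Finset.univ.filter (fun u : Fin d × Fin d => ¬ u.1 = u.2))
      (fun u : Fin d × Fin d => u.1 < u.2) F, Finset.filter_filter, Finset.filter_filter]
    congr 1
    · apply Finset.sum_congr _ (fun _ _ => rfl)
      apply Finset.filter_congr
      intro u _
      constructor
      · exact fun h => h.2
      · exact fun h => ⟨ne_of_lt h, h⟩
    · apply Finset.sum_congr _ (fun _ _ => rfl)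
      apply Finset.filter_congr
      intro u _
      constructor
      · exact fun h => lt_of_le_of_ne (not_lt.1 h.2) (fun e => h.1 e.symm)
      · exact fun h => ⟨ne_of_gt h, not_lt.2 (le_of_lt h)⟩
  rw [h0, h0]
  congr 1
  · apply Finset.sum_congr rfl
    intro u hu
    have h : u.1 = u.2 := by
      rw [hS1] at hu
      simpa using hu
    simp [hermFam, epsHalf, h]
  · have hswap : ∀ F : Fin d × Fin d → Matrix (Fin dA × Fin dB) (Fin dA × Fin dB) ℂ,
        ∑ u ∈ S3, F u = ∑ u ∈ S2, F u.swap := by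
      intro F
      apply Finset.sum_equiv (Equiv.prodComm (Fin d) (Fin d))
      · intro u
        rw [hS2, hS3]
        simp
      · intro u _
        simp
    rw [hswap, hswap, ← Finset.sum_add_distrib, ← Finset.sum_add_distrib]
    apply Finset.sum_congr rfl
    intro u hu
    have h : u.1 < u.2 := by
      rw [hS2] at hu
      simpa using hu
    have h1 : ¬ (u.1 = u.2) := ne_of_lt h
    have h2 : ¬ (u.2 = u.1) := ne_of_gt h
    have h3 : ¬ (u.2 < u.1) := not_lt.2 (le_of_lt h)
    have hid := pair_identity (FF φ u.1 u.2) (FF φ u.2 u.1) (FF ξ u.1 u.2) (FF ξ u.2 u.1)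
    have hsw1 : u.swap.1 = u.2 := rfl
    have hsw2 : u.swap.2 = u.1 := rfl
    simp only [hermFam, epsHalf, hsw1, hsw2, h, h1, h2, h3, if_true, if_false,
      ite_true, ite_false]
    calc ((s u.1 * s u.2 : ℝ) : ℂ) • (FF φ u.1 u.2 ⊗ₖ FF ξ u.1 u.2) +
          ((s u.2 * s u.1 : ℝ) : ℂ) • (FF φ u.2 u.1 ⊗ₖ FF ξ u.2 u.1)
        = (((s u.1 : ℂ) * (s u.2 : ℂ)) * (1/2)) •
            ((2:ℂ) • (FF φ u.1 u.2 ⊗ₖ FF ξ u.1 u.2) +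
             (2:ℂ) • (FF φ u.2 u.1 ⊗ₖ FF ξ u.2 u.1)) := by
          push_cast
          module
      _ = (((s u.1 : ℂ) * (s u.2 : ℂ)) * (1/2)) •
            ((FF φ u.1 u.2 + FF φ u.2 u.1) ⊗ₖ (FF ξ u.1 u.2 + FF ξ u.2 u.1) -
             (Complex.I • FF φ u.2 u.1 - Complex.I • FF φ u.1 u.2) ⊗ₖ
               (Complex.I • FF ξ u.2 u.1 - Complex.I • FF ξ u.1 u.2)) := by rw [hid]
      _ = ((1/2 * s u.1 * s u.2 : ℝ) : ℂ) •
            ((FF φ u.1 u.2 + FF φ u.2 u.1) ⊗ₖ (FF ξ u.1 u.2 + FF ξ u.2 u.1)) +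
          ((-(1/2) * s u.2 * s u.1 : ℝ) : ℂ) •
            ((Complex.I • FF φ u.2 u.1 - Complex.I • FF φ u.1 u.2) ⊗ₖ
               (Complex.I • FF ξ u.2 u.1 - Complex.I • FF ξ u.1 u.2)) := by
          push_cast
          module

/-! #### Reality of Hermitian trace products -/

lemma herm_trace_re {n : ℕ} (X Y : Matrix (Fin n) (Fin n) ℂ)
    (hX : X.IsHermitian) (hY : Y.IsHermitian) :
    (((X * Y).trace.re : ℝ) : ℂ) = (X * Y).trace := by
  have hstar : star ((X * Y).trace) = (X * Y).trace := by
    rw [← Matrix.trace_conjTranspose, Matrix.conjTranspose_mul, hX.eq, hY.eq,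
      Matrix.trace_mul_comm]
  exact Complex.conj_eq_iff_re.mp hstar

end Aux

/-- For a pure state `ρ = |ψ⟩⟨ψ|` and `t ∈ {1,…,d}`, for every
`p ∈ [1,∞)` the Correlation Minor Norm `M_{t²,p}(ρ)` is nonzero if and only if the
Schmidt rank of `|ψ⟩` (the number of nonzero Schmidt coefficients) is at least `t`. -/
theorem pure_state_cmn_nonzero_iff_schmidt_rank
    (dA dB : ℕ) (hdA : 0 < dA) (hdB : 0 < dB)
    (t : ℕ) (ht1 : 1 ≤ t) (ht2 : t ≤ min dA dB)
    (p : ℝ) (hp : 1 ≤ p)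
    (s : Fin (min dA dB) → ℝ) (hs : ∀ k, 0 ≤ s k) (hnorm : ∑ k, s k ^ 2 = 1)
    (φ : Fin (min dA dB) → (Fin dA → ℂ)) (ξ : Fin (min dA dB) → (Fin dB → ℂ))
    (hφ : IsONFamily φ) (hξ : IsONFamily ξ)
    (A : Fin (dA ^ 2) → Matrix (Fin dA) (Fin dA) ℂ)
    (B : Fin (dB ^ 2) → Matrix (Fin dB) (Fin dB) ℂ)
    (hA : IsHSOrthonormal A) (hB : IsHSOrthonormal B)
    (ρ : Matrix (Fin dA × Fin dB) (Fin dA × Fin dB) ℂ)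
    (hρdef : ρ = Matrix.vecMulVec (pureVec s φ ξ) (star (pureVec s φ ξ)))
    (σ : Fin (min dA dB ^ 2) → ℝ)
    (hσ : IsSingularValues (corrMat ρ A B) σ) :
    CMN σ (t ^ 2) p ≠ 0 ↔ t ≤ (Finset.univ.filter fun k => s k ≠ 0).card := by
  classical
  obtain ⟨hσ0, hσanti, U, V, hU, hV, hC⟩ := hσ
  set P : Matrix (Fin (dA ^ 2)) (Fin (min dA dB) × Fin (min dA dB)) ℝ :=
    Matrix.of fun i u => (A i * hermFam φ u).trace.re with hPdef
  set Q : Matrix (Fin (dB ^ 2)) (Fin (min dA dB) × Fin (min dA dB)) ℝ :=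
    Matrix.of fun j u => (B j * hermFam ξ u).trace.re with hQdef
  set D : Matrix (Fin (min dA dB) × Fin (min dA dB)) (Fin (min dA dB) × Fin (min dA dB)) ℝ :=
    Matrix.diagonal (fun u => epsHalf u * s u.1 * s u.2) with hDdef
  have hfact : corrMat ρ A B = P * D * Qᵀ := by
    ext i j
    show (ρ * (A i ⊗ₖ B j)).trace.re = _
    rw [hρdef, rho_eq_sum_herm, Finset.sum_mul]
    simp only [smul_mul_assoc, Matrix.trace_sum, Matrix.trace_smul,
      ← Matrix.mul_kronecker_mul, Matrix.trace_kronecker, smul_eq_mul]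
    rw [Complex.re_sum]
    have hrhs : (P * D * Qᵀ) i j = ∑ u : Fin (min dA dB) × Fin (min dA dB),
        (P i u * (epsHalf u * s u.1 * s u.2)) * Q j u := by
      rw [Matrix.mul_apply]
      apply Finset.sum_congr rfl
      intro u _
      rw [Matrix.transpose_apply, hDdef, Matrix.mul_diagonal]
    rw [hrhs]
    apply Finset.sum_congr rfl
    intro u _
    have e1 : (hermFam φ u * A i).trace = (((A i * hermFam φ u).trace.re : ℝ) : ℂ) := by
      rw [Matrix.trace_mul_comm]
      exact (herm_trace_re _ _ (hA.1 i) (hermFam_isHermitian φ u)).symm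
    have e2 : (hermFam ξ u * B j).trace = (((B j * hermFam ξ u).trace.re : ℝ) : ℂ) := by
      rw [Matrix.trace_mul_comm]
      exact (herm_trace_re _ _ (hB.1 j) (hermFam_isHermitian ξ u)).symm
    rw [e1, e2, ← Complex.ofReal_mul, ← Complex.ofReal_mul, Complex.ofReal_re]
    show _ = ((A i * hermFam φ u).trace.re * (epsHalf u * s u.1 * s u.2)) *
      (B j * hermFam ξ u).trace.re
    ring
  have hPt : Pᵀ * P = Matrix.diagonal (fun u : Fin (min dA dB) × Fin (min dA dB) => wH u) := by
    ext u u'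
    simp only [Matrix.mul_apply, Matrix.transpose_apply, hPdef, Matrix.of_apply]
    rw [hs_parseval_s10 A hA _ _ (hermFam_isHermitian φ u) (hermFam_isHermitian φ u'),
      trace_hermFam_mul φ hφ u u']
    by_cases h : u = u'
    · subst h
      simp [Matrix.diagonal_apply_eq]
    · simp [h, Matrix.diagonal_apply_ne _ h]
  have hQt : Qᵀ * Q = Matrix.diagonal (fun u : Fin (min dA dB) × Fin (min dA dB) => wH u) := by
    ext u u'
    simp only [Matrix.mul_apply, Matrix.transpose_apply, hQdef, Matrix.of_apply]
    rw [hs_parseval_s10 B hB _ _ (hermFam_isHermitian ξ u) (hermFam_isHermitian ξ u'),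
      trace_hermFam_mul ξ hξ u u']
    by_cases h : u = u'
    · subst h
      simp [Matrix.diagonal_apply_eq]
    · simp [h, Matrix.diagonal_apply_ne _ h]
  have hwne : ∀ u : Fin (min dA dB) × Fin (min dA dB), wH u ≠ 0 := by
    intro u; unfold wH; split_ifs <;> norm_num
  have hwinv : Matrix.diagonal (fun u : Fin (min dA dB) × Fin (min dA dB) => (wH u)⁻¹) *
      Matrix.diagonal (fun u : Fin (min dA dB) × Fin (min dA dB) => wH u) = 1 := by
    have h1 : (fun u : Fin (min dA dB) × Fin (min dA dB) => (wH u)⁻¹ * wH u) =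
        fun _ => (1:ℝ) := by
      funext u; exact inv_mul_cancel₀ (hwne u)
    rw [Matrix.diagonal_mul_diagonal, h1, Matrix.diagonal_one]
  have hwinv' : Matrix.diagonal (fun u : Fin (min dA dB) × Fin (min dA dB) => wH u) *
      Matrix.diagonal (fun u : Fin (min dA dB) × Fin (min dA dB) => (wH u)⁻¹) = 1 := by
    have h1 : (fun u : Fin (min dA dB) × Fin (min dA dB) => wH u * (wH u)⁻¹) =
        fun _ => (1:ℝ) := by
      funext u; exact mul_inv_cancel₀ (hwne u)
    rw [Matrix.diagonal_mul_diagonal, h1, Matrix.diagonal_one]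
  have hrank1 : (corrMat ρ A B).rank = D.rank := by
    rw [hfact]
    exact rank_sandwich' P Q D _ _ (by rw [hPt]; exact hwinv) (by rw [hQt]; exact hwinv')
  have heps : ∀ u : Fin (min dA dB) × Fin (min dA dB), epsHalf u ≠ 0 := by
    intro u; unfold epsHalf; split_ifs <;> norm_num
  have hfilter : (Finset.univ.filter
        (fun u : Fin (min dA dB) × Fin (min dA dB) => epsHalf u * s u.1 * s u.2 ≠ 0)) =
      (Finset.univ.filter fun k => s k ≠ 0) ×ˢ (Finset.univ.filter fun k => s k ≠ 0) := by
    rw [← Finset.filter_product, ← Finset.univ_product_univ]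
    apply Finset.filter_congr
    intro u _
    constructor
    · intro h
      constructor
      · intro h0; exact h (by rw [h0, mul_zero, zero_mul])
      · intro h0; exact h (by rw [h0, mul_zero])
    · rintro ⟨h1, h2⟩
      exact mul_ne_zero (mul_ne_zero (heps u) h1) h2
  have hrankD : D.rank = (Finset.univ.filter fun k => s k ≠ 0).card ^ 2 := by
    rw [hDdef, rank_diagonal', hfilter, Finset.card_product, sq]
  have hd2A : min dA dB ^ 2 ≤ dA ^ 2 := Nat.pow_le_pow_left (min_le_left _ _) 2
  have hd2B : min dA dB ^ 2 ≤ dB ^ 2 := Nat.pow_le_pow_left (min_le_right _ _) 2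
  have hrank2 : (corrMat ρ A B).rank = (Finset.univ.filter fun k => σ k ≠ 0).card := by
    rw [hC, rank_sandwich' U V _ 1 1 (by rw [Matrix.one_mul, hU]) (by rw [hV, Matrix.one_mul]),
      rank_svdDiag _ _ _ hd2A hd2B]
  have hN : (Finset.univ.filter fun k => σ k ≠ 0).card =
      (Finset.univ.filter fun k => s k ≠ 0).card ^ 2 := by
    rw [← hrank2, hrank1, hrankD]
  rw [cmn_ne_zero_iff σ (t ^ 2) p hp hσ0, hN]
  exact ⟨fun h => (Nat.pow_le_pow_iff_left (two_ne_zero)).1 h,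
    fun h => Nat.pow_le_pow_left h 2⟩
end
end

section
/- Let d_A = d_B = 2 and let ρ = |ψ⟩⟨ψ| be a two-qubit pure state with Schmidt coefficients s_1, s_2 (so s_1² + s_2² = 1). Then the determinant of the 4×4 correlation matrix of ρ satisfies |det 𝒞| = s_1⁴ s_2⁴ = [s_1²(1 − s_1²)]². -/
open Matrix Finset
open scoped Kronecker ComplexOrder

noncomputable section

def uOf (φ : Fin 2 → Fin 2 → ℂ) : Matrix (Fin 2) (Fin 2) ℂ := Matrix.of fun i k => φ k i

def coMat (φ : Fin 2 → Fin 2 → ℂ) (X : Matrix (Fin 2) (Fin 2) ℂ) : Matrix (Fin 2) (Fin 2) ℂ :=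
  (uOf φ)ᴴ * X * uOf φ

lemma coMat_apply (φ : Fin 2 → Fin 2 → ℂ) (X : Matrix (Fin 2) (Fin 2) ℂ) (k l : Fin 2) :
    coMat φ X k l = star (φ k) ⬝ᵥ X *ᵥ φ l := by
  simp [coMat, uOf, Matrix.mul_apply, dotProduct, Matrix.mulVec, Fin.sum_univ_two,
    conjTranspose_apply]
  ring

lemma coMat_isHermitian (φ : Fin 2 → Fin 2 → ℂ) (X : Matrix (Fin 2) (Fin 2) ℂ)
    (hX : X.IsHermitian) : (coMat φ X).IsHermitian :=
  Matrix.isHermitian_conjTranspose_mul_mul _ hX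

lemma trace_eq (φ : Fin 2 → Fin 2 → ℂ) (hφ : ∀ k l, star (φ k) ⬝ᵥ φ l = if k = l then 1 else 0)
    (X Y : Matrix (Fin 2) (Fin 2) ℂ) :
    (X * Y).trace = ((coMat φ X) * (coMat φ Y)).trace := by
  have hU : (uOf φ)ᴴ * (uOf φ) = 1 := by
    ext k l
    have := hφ k l
    simpa [uOf, Matrix.mul_apply, dotProduct, conjTranspose_apply, Matrix.one_apply] using this
  have hU' : (uOf φ) * (uOf φ)ᴴ = 1 := mul_eq_one_comm.mp hU
  have key : (coMat φ X) * (coMat φ Y) = (uOf φ)ᴴ * (X * Y) * uOf φ := by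
    unfold coMat
    rw [show (uOf φ)ᴴ * X * uOf φ * ((uOf φ)ᴴ * Y * uOf φ)
        = (uOf φ)ᴴ * X * (uOf φ * (uOf φ)ᴴ) * Y * uOf φ by
      simp only [Matrix.mul_assoc]]
    rw [hU']
    simp [Matrix.mul_assoc]
  rw [key, Matrix.trace_mul_cycle, hU', one_mul]

def cvec (φ : Fin 2 → Fin 2 → ℂ) (X : Matrix (Fin 2) (Fin 2) ℂ) : Fin 4 → ℝ :=
  ![(coMat φ X 0 0).re, (coMat φ X 1 1).re,
    Real.sqrt 2 * (coMat φ X 0 1).re, Real.sqrt 2 * (coMat φ X 0 1).im]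

lemma herm_facts {x : Matrix (Fin 2) (Fin 2) ℂ} (hx : x.IsHermitian) :
    x 1 0 = (starRingEnd ℂ) (x 0 1) ∧ (x 0 0).im = 0 ∧ (x 1 1).im = 0 := by
  refine ⟨(hx.apply 1 0).symm, ?_, ?_⟩
  · exact Complex.conj_eq_iff_im.mp (hx.apply 0 0)
  · exact Complex.conj_eq_iff_im.mp (hx.apply 1 1)

lemma isom (φ : Fin 2 → Fin 2 → ℂ) (hφ : ∀ k l, star (φ k) ⬝ᵥ φ l = if k = l then 1 else 0)
    (X Y : Matrix (Fin 2) (Fin 2) ℂ) (hX : X.IsHermitian) (hY : Y.IsHermitian) :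
    (X * Y).trace.re = ∑ m : Fin 4, cvec φ X m * cvec φ Y m := by
  rw [trace_eq φ hφ X Y]
  obtain ⟨hx10, hx00, hx11⟩ := herm_facts (coMat_isHermitian φ X hX)
  obtain ⟨hy10, hy00, hy11⟩ := herm_facts (coMat_isHermitian φ Y hY)
  have h2 : Real.sqrt 2 * Real.sqrt 2 = 2 := Real.mul_self_sqrt (by norm_num)
  set x := coMat φ X
  set y := coMat φ Y
  have ht : (x * y).trace = x 0 0 * y 0 0 + x 0 1 * y 1 0 + x 1 0 * y 0 1 + x 1 1 * y 1 1 := by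
    simp [Matrix.trace, Matrix.mul_apply, Fin.sum_univ_two]
    ring
  rw [ht, hx10, hy10]
  simp only [cvec, Fin.sum_univ_four, Matrix.cons_val_zero, Matrix.cons_val_one,
    Matrix.head_cons, Matrix.cons_val_two, Matrix.tail_cons, Matrix.cons_val_three,
    Complex.add_re, Complex.mul_re, Complex.conj_re, Complex.conj_im, hx00, hx11, hy00, hy11]
  linear_combination (-((x 0 1).re * (y 0 1).re + (x 0 1).im * (y 0 1).im)) * h2

set_option maxHeartbeats 1000000 in
lemma pure_trace (s : Fin 2 → ℝ) (φ ξ : Fin 2 → Fin 2 → ℂ) (X Y : Matrix (Fin 2) (Fin 2) ℂ) :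
    ((Matrix.vecMulVec (pureVec s φ ξ) (star (pureVec s φ ξ))) * (X ⊗ₖ Y)).trace
      = ∑ k : Fin 2, ∑ l : Fin 2, (s k : ℂ) * (s l : ℂ) * coMat φ X k l * coMat ξ Y k l := by
  simp only [coMat_apply]
  simp only [Matrix.trace, Matrix.diag, Matrix.mul_apply, Matrix.vecMulVec_apply,
    Matrix.kroneckerMap_apply, pureVec, dotProduct, Matrix.mulVec, Fintype.sum_prod_type,
    Fin.sum_univ_two, Pi.star_apply, star_sum, star_mul', Complex.star_def, map_add, _root_.map_mul,
    Complex.conj_ofReal, Finset.sum_mul, Finset.mul_sum]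
  ring

set_option maxHeartbeats 1000000 in
lemma main4 (s : Fin 2 → ℝ) (φ ξ : Fin 2 → Fin 2 → ℂ)
    (hφ : ∀ k l, star (φ k) ⬝ᵥ φ l = if k = l then 1 else 0)
    (hξ : ∀ k l, star (ξ k) ⬝ᵥ ξ l = if k = l then 1 else 0)
    (A B : Fin 4 → Matrix (Fin 2) (Fin 2) ℂ)
    (hAh : ∀ i, (A i).IsHermitian) (hAo : ∀ i j, (A i * A j).trace = if i = j then 1 else 0)
    (hBh : ∀ i, (B i).IsHermitian) (hBo : ∀ i j, (B i * B j).trace = if i = j then 1 else 0) :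
    |(Matrix.of (fun i j : Fin 4 =>
        ((Matrix.vecMulVec (pureVec s φ ξ) (star (pureVec s φ ξ))) *
          (A i ⊗ₖ B j)).trace.re)).det| = s 0 ^ 4 * s 1 ^ 4 := by
  have hC : (Matrix.of (fun i j : Fin 4 =>
        ((Matrix.vecMulVec (pureVec s φ ξ) (star (pureVec s φ ξ))) *
          (A i ⊗ₖ B j)).trace.re))
      = (Matrix.of fun i m => cvec φ (A i) m) *
        Matrix.diagonal ![s 0 ^ 2, s 1 ^ 2, s 0 * s 1, -(s 0 * s 1)] *
        (Matrix.of fun j m => cvec ξ (B j) m)ᵀ := by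
    ext i j
    have h2 : Real.sqrt 2 * Real.sqrt 2 = 2 := Real.mul_self_sqrt (by norm_num)
    obtain ⟨hx10, hx00, hx11⟩ := herm_facts (coMat_isHermitian φ (A i) (hAh i))
    obtain ⟨hy10, hy00, hy11⟩ := herm_facts (coMat_isHermitian ξ (B j) (hBh j))
    show ((Matrix.vecMulVec (pureVec s φ ξ) (star (pureVec s φ ξ))) *
          (A i ⊗ₖ B j)).trace.re = _
    rw [pure_trace s φ ξ (A i) (B j)]
    set x := coMat φ (A i)
    set y := coMat ξ (B j)
    simp only [Fin.sum_univ_two]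
    rw [hx10, hy10]
    simp only [Matrix.mul_apply, Matrix.mul_diagonal, Matrix.transpose_apply, Matrix.of_apply,
      Fin.sum_univ_four, cvec, Matrix.cons_val_zero, Matrix.cons_val_one, Matrix.head_cons,
      Matrix.cons_val_two, Matrix.tail_cons, Matrix.cons_val_three,
      Matrix.diagonal_apply, Fin.isValue, Fin.reduceEq, reduceIte,
      Complex.add_re, Complex.mul_re, Complex.mul_im, Complex.ofReal_re, Complex.ofReal_im,
      Complex.conj_re, Complex.conj_im, hx00, hx11, hy00, hy11]
    linear_combination (-(s 0 * s 1 * ((x 0 1).re * (y 0 1).re - (x 0 1).im * (y 0 1).im))) * h2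
  rw [hC, Matrix.det_mul, Matrix.det_mul, Matrix.det_transpose]
  have hdiag : (Matrix.diagonal ![s 0 ^ 2, s 1 ^ 2, s 0 * s 1, -(s 0 * s 1)]).det
      = -(s 0 ^ 4 * s 1 ^ 4) := by
    simp [Matrix.det_diagonal, Fin.prod_univ_four]
    ring
  have hortho : ∀ (e : Fin 2 → Fin 2 → ℂ)
      (he : ∀ k l, star (e k) ⬝ᵥ e l = if k = l then 1 else 0)
      (F : Fin 4 → Matrix (Fin 2) (Fin 2) ℂ) (hFh : ∀ i, (F i).IsHermitian)
      (hFo : ∀ i j, (F i * F j).trace = if i = j then 1 else 0),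
      |(Matrix.of fun i m => cvec e (F i) m).det| = 1 := by
    intro e he F hFh hFo
    have hOO : (Matrix.of fun i m => cvec e (F i) m) *
        (Matrix.of fun i m => cvec e (F i) m)ᵀ = 1 := by
      ext i j
      have hre := congrArg Complex.re (hFo i j)
      rw [isom e he (F i) (F j) (hFh i) (hFh j)] at hre
      simpa [Matrix.mul_apply, Matrix.transpose_apply, Matrix.of_apply, Matrix.one_apply,
        apply_ite Complex.re] using hre
    have hdet : (Matrix.of fun i m => cvec e (F i) m).det *
        (Matrix.of fun i m => cvec e (F i) m).det = 1 := by
      have := congrArg Matrix.det hOO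
      rwa [Matrix.det_mul, Matrix.det_transpose, Matrix.det_one] at this
    rcases mul_self_eq_one_iff.mp hdet with h | h <;> rw [h] <;> norm_num
  rw [abs_mul, abs_mul, hdiag, abs_neg, hortho φ hφ A hAh hAo, hortho ξ hξ B hBh hBo,
    one_mul, mul_one, abs_of_nonneg (by positivity)]

/-- For a two-qubit pure state with Schmidt coefficients `s₁, s₂`
(`s₁² + s₂² = 1`), the determinant of the 4×4 correlation matrix satisfies
`|det 𝒞| = s₁⁴ s₂⁴ = [s₁²(1 − s₁²)]²`. -/
theorem two_qubit_pure_state_det_corr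
    (s : Fin 2 → ℝ) (hs : ∀ k, 0 ≤ s k) (hnorm : s 0 ^ 2 + s 1 ^ 2 = 1)
    (φ : Fin 2 → (Fin 2 → ℂ)) (ξ : Fin 2 → (Fin 2 → ℂ))
    (hφ : IsONFamily φ) (hξ : IsONFamily ξ)
    (A : Fin (2 ^ 2) → Matrix (Fin 2) (Fin 2) ℂ)
    (B : Fin (2 ^ 2) → Matrix (Fin 2) (Fin 2) ℂ)
    (hA : IsHSOrthonormal A) (hB : IsHSOrthonormal B)
    (ρ : Matrix (Fin 2 × Fin 2) (Fin 2 × Fin 2) ℂ)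
    (hρdef : ρ = Matrix.vecMulVec (pureVec s φ ξ) (star (pureVec s φ ξ))) :
    |(corrMat ρ A B).det| = s 0 ^ 4 * s 1 ^ 4 ∧
    s 0 ^ 4 * s 1 ^ 4 = (s 0 ^ 2 * (1 - s 0 ^ 2)) ^ 2 := by
  constructor
  · rw [hρdef]
    exact main4 s φ ξ hφ hξ A B hA.1 hA.2 hB.1 hB.2
  · have h1 : s 1 ^ 2 = 1 - s 0 ^ 2 := by linarith
    rw [← h1]; ring
end
end
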